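/- arXiv:0705.3531 — 6 statements merged into one kernel-verified Lean document; each statement's English description precedes it below -/
import Mathlib

section
/- For integers $n > d \geq 3$ with $d-1$ even, one has $2\sum_{i=0}^{(d-3)/2}\binom{n-d+i}{i} + \binom{n-d+(d-1)/2}{(d-1)/2} = \frac{n \cdot \prod_{i=1}^{n-d}\left(\frac{d-1}{2}+i\right)}{(n-d+1)!}$. (This says the multiplicity of the boundary complex of the cyclic polytope $C(n,d-1)$ equals the upper bound from the maximal shifts of its minimal free resolution when $d-1$ is even.) -/
open Finset

lemma aux_sum_choose (m : ℕ) : ∀ k : ℕ,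
    (∑ i ∈ Finset.range k, (m + i).choose i) = (m + k).choose (m + 1) := by
  intro k
  induction k with
  | zero => simp [Nat.choose_eq_zero_of_lt]
  | succ k ih =>
      rw [Finset.sum_range_succ, ih]
      have hsymm : (m + k).choose k = (m + k).choose m := by
        have := Nat.choose_symm (Nat.le_add_left k m)
        simpa [Nat.add_sub_cancel] using this.symm
      have : (m + (k + 1)).choose (m + 1) = (m + k).choose m + (m + k).choose (m + 1) :=
        Nat.choose_succ_succ (m + k) m
      omega

lemma aux_prod_fact (k : ℕ) : ∀ m : ℕ,
    (∏ i ∈ Finset.Icc 1 m, ((k : ℚ) + (i : ℚ))) * (k.factorial : ℚ)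
      = ((k + m).factorial : ℚ) := by
  intro m
  induction m with
  | zero => simp
  | succ m ih =>
      rw [Finset.prod_Icc_succ_top (by omega : 1 ≤ m + 1)]
      have : ((k + (m + 1)).factorial : ℚ) = ((k + m + 1) : ℚ) * ((k + m).factorial : ℚ) := by
        have : (k + (m + 1)).factorial = (k + m + 1) * (k + m).factorial := by
          rw [show k + (m + 1) = (k + m) + 1 by ring, Nat.factorial_succ]
        rw [this]; push_cast; ring
      rw [this, ← ih]; push_cast; ring

lemma aux_nat_identity (m k : ℕ) (hk : 1 ≤ k) :
    (2 * (m + k).choose (m + 1) + (m + k).choose k) * (k.factorial * (m + 1).factorial)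
      = (m + 2 * k + 1) * (m + k).factorial := by
  obtain ⟨k', rfl⟩ : ∃ k', k = k' + 1 := ⟨k - 1, by omega⟩
  have hA : (m + (k' + 1)).choose (m + 1) * (m + 1).factorial * k'.factorial
      = (m + (k' + 1)).factorial := by
    have := Nat.choose_mul_factorial_mul_factorial (show m + 1 ≤ m + (k' + 1) by omega)
    simpa [show m + (k' + 1) - (m + 1) = k' by omega] using this
  have hB : (m + (k' + 1)).choose (k' + 1) * (k' + 1).factorial * m.factorial
      = (m + (k' + 1)).factorial := by
    have := Nat.choose_mul_factorial_mul_factorial (show k' + 1 ≤ m + (k' + 1) by omega)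
    simpa [show m + (k' + 1) - (k' + 1) = m by omega] using this
  calc (2 * (m + (k' + 1)).choose (m + 1) + (m + (k' + 1)).choose (k' + 1)) *
        ((k' + 1).factorial * (m + 1).factorial)
      = 2 * (k' + 1) * ((m + (k' + 1)).choose (m + 1) * (m + 1).factorial * k'.factorial)
        + (m + 1) * ((m + (k' + 1)).choose (k' + 1) * (k' + 1).factorial * m.factorial) := by
        rw [Nat.factorial_succ k', Nat.factorial_succ m]; ring
    _ = (m + 2 * (k' + 1) + 1) * (m + (k' + 1)).factorial := by rw [hA, hB]; ring

/-- For integers `n > d ≥ 3` with `d - 1` even, the multiplicity of the boundary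
complex of the cyclic polytope `C(n, d-1)` equals the upper bound coming from the
maximal shifts of its minimal free resolution:
`2·∑_{i=0}^{(d-3)/2} C(n-d+i, i) + C(n-d+(d-1)/2, (d-1)/2)
  = n·∏_{i=1}^{n-d} ((d-1)/2 + i) / (n-d+1)!`. -/
theorem cyclic_even_multiplicity_eq_upper_bound (n d : ℕ) (hd : 3 ≤ d) (hnd : d < n)
    (hev : Even (d - 1)) :
    (2 * ∑ i ∈ Finset.range ((d - 3) / 2 + 1), ((n - d + i).choose i : ℚ) +
        ((n - d + (d - 1) / 2).choose ((d - 1) / 2) : ℚ)) =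
      (n : ℚ) * (∏ i ∈ Finset.Icc 1 (n - d), (((d : ℚ) - 1) / 2 + (i : ℚ))) /
        (Nat.factorial (n - d + 1) : ℚ) := by
  obtain ⟨k, hk2⟩ := hev
  set m := n - d with hm
  have hd1 : d = 2 * k + 1 := by omega
  have hk1 : 1 ≤ k := by omega
  have hm1 : 1 ≤ m := by omega
  have hn : n = m + 2 * k + 1 := by omega
  have h1 : (d - 3) / 2 + 1 = k := by omega
  have h2 : (d - 1) / 2 = k := by omega
  have h3 : ((d : ℚ) - 1) / 2 = (k : ℚ) := by
    rw [hd1]; push_cast; ring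
  rw [h1, h2, h3]
  -- sum
  have hsum : (∑ i ∈ Finset.range k, ((m + i).choose i : ℚ))
      = ((m + k).choose (m + 1) : ℚ) := by
    rw [← Nat.cast_sum]
    exact_mod_cast congrArg (Nat.cast : ℕ → ℚ) (aux_sum_choose m k)
  rw [hsum]
  -- product
  have hfk : (k.factorial : ℚ) ≠ 0 := Nat.cast_ne_zero.mpr k.factorial_ne_zero
  have hfm : ((m + 1).factorial : ℚ) ≠ 0 := Nat.cast_ne_zero.mpr (m + 1).factorial_ne_zero
  have hP : (∏ i ∈ Finset.Icc 1 m, ((k : ℚ) + (i : ℚ)))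
      = ((k + m).factorial : ℚ) / (k.factorial : ℚ) := by
    rw [eq_div_iff hfk]; exact aux_prod_fact k m
  rw [hP]
  rw [mul_div_assoc, div_div, ← mul_div_assoc, eq_div_iff (mul_ne_zero hfk hfm)]
  have := aux_nat_identity m k hk1
  have hcast : ((2 * (m + k).choose (m + 1) + (m + k).choose k) *
      (k.factorial * (m + 1).factorial) : ℚ) = ((m + 2 * k + 1 : ℕ) : ℚ) * ((m + k).factorial : ℚ) := by
    exact_mod_cast congrArg (Nat.cast : ℕ → ℚ) this
  push_cast at hcast ⊢
  rw [hn]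
  push_cast
  rw [Nat.add_comm k m]
  linarith [hcast]
end

section
/- For integers $n \geq d \geq 4$ with $d-1$ odd, one has $2\binom{n-d/2}{d/2-1} \leq \frac{n \cdot \prod_{i=1}^{n-d}\left(\lfloor\frac{d-1}{2}\rfloor + i + 1\right)}{(n-d+1)!}$, i.e., $2\binom{n-d/2}{d/2-1} \leq \frac{n\left(\frac{d}{2}+1\right)\left(\frac{d}{2}+2\right)\cdots\left(\frac{d}{2}+n-d\right)}{(n-d+1)!}$. -/
open Finset

lemma prod_shift_fac (k m : ℕ) :
    ∏ i ∈ Finset.Icc 1 m, ((k : ℚ) + (i : ℚ)) =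
      (Nat.factorial (k + m) : ℚ) / (Nat.factorial k : ℚ) := by
  induction m with
  | zero => simp [div_self (by positivity : (Nat.factorial k : ℚ) ≠ 0)]
  | succ m ih =>
    rw [Finset.prod_Icc_succ_top (by omega : 1 ≤ m + 1), ih]
    have h1 : (Nat.factorial k : ℚ) ≠ 0 := by positivity
    have h2 : k + (m + 1) = (k + m) + 1 := by omega
    rw [h2, Nat.factorial_succ]
    push_cast
    field_simp
    ring

lemma fac_pred_mul (k : ℕ) (h : 1 ≤ k) :
    Nat.factorial k = k * Nat.factorial (k - 1) := by
  obtain ⟨t, rfl⟩ : ∃ t, k = t + 1 := ⟨k - 1, by omega⟩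
  simp [Nat.factorial_succ]

/-- For integers `n ≥ d ≥ 4` with `d - 1` odd, the multiplicity
`2·C(n - d/2, d/2 - 1)` of the boundary complex of the cyclic polytope `C(n, d-1)`
is at most the upper bound `n·(d/2+1)(d/2+2)⋯(d/2+n-d)/(n-d+1)!` coming from the
maximal shifts of its minimal free resolution. -/
theorem cyclic_odd_multiplicity_le_upper_bound (n d : ℕ) (hd : 4 ≤ d) (hnd : d ≤ n)
    (hodd : Odd (d - 1)) :
    2 * (((n - d / 2).choose (d / 2 - 1) : ℚ)) ≤
      (n : ℚ) * (∏ i ∈ Finset.Icc 1 (n - d), ((d : ℚ) / 2 + (i : ℚ))) /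
        (Nat.factorial (n - d + 1) : ℚ) := by
  obtain ⟨j, hj⟩ := hodd
  set k := d / 2 with hk
  have hdk : d = 2 * k := by omega
  set m := n - d with hm
  have hn : n = 2 * k + m := by omega
  have hk2 : 2 ≤ k := by omega
  have hcast : (d : ℚ) / 2 = (k : ℚ) := by rw [hdk]; push_cast; ring
  have h1 : n - d / 2 = k + m := by omega
  simp only [hcast, h1]
  rw [prod_shift_fac k m]
  have hle : k - 1 ≤ k + m := by omega
  rw [show n - k = k + m by omega]
  rw [Nat.cast_choose ℚ hle]
  have h3 : k + m - (k - 1) = m + 1 := by omega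
  rw [h3]
  have hfk : Nat.factorial k = k * Nat.factorial (k - 1) := fac_pred_mul k (by omega)
  have hF : (0:ℚ) < (Nat.factorial (k + m) : ℚ) := by positivity
  have hA : (0:ℚ) < (Nat.factorial (k - 1) : ℚ) := by positivity
  have hB : (0:ℚ) < (Nat.factorial (m + 1) : ℚ) := by positivity
  have hkQ : (0:ℚ) < (k : ℚ) := by positivity
  have hnk : 2 * (k : ℚ) ≤ (n : ℚ) := by
    rw [hn]; push_cast; linarith [Nat.cast_nonneg (α := ℚ) m]
  rw [hfk]
  push_cast
  field_simp
  nlinarith [mul_pos (mul_pos hF hA) hB, mul_pos hA hB,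
    mul_nonneg (mul_nonneg hF.le hA.le) hB.le,
    mul_nonneg (mul_nonneg (mul_nonneg hF.le hA.le) hB.le) (mul_nonneg hA.le hB.le)]
end

section
/- Let $n > d \geq 2m$ with $m \geq 2$. Then $2\binom{n-d+m}{m-1} + (d-2m)\binom{n-d+m-1}{m-1} \geq \frac{n \cdot \prod_{i=1}^{n-d}(m+i-1)}{(n-d+1)!}$. -/
open Finset

lemma prod_eq_asc (m k : ℕ) :
    (∏ i ∈ Finset.Icc 1 k, ((m : ℚ) + (i : ℚ) - 1)) = (m.ascFactorial k : ℚ) := by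
  induction k with
  | zero => simp
  | succ k ih =>
    rw [Finset.prod_Icc_succ_top (by omega), ih, Nat.ascFactorial_succ]
    push_cast
    ring

lemma nat_key (n d m k : ℕ) (hm : 2 ≤ m) (hd : 2 * m ≤ d) (hn : n = d + k) (hk : 1 ≤ k) :
    n * m.ascFactorial k ≤
      (2 * ((k + m).choose (m - 1)) + (d - 2 * m) * ((k + m - 1).choose (m - 1)))
        * Nat.factorial (k + 1) := by
  have hfac : 0 < Nat.factorial (m - 1) := Nat.factorial_pos _
  apply Nat.le_of_mul_le_mul_right _ hfac
  have I1 : m.ascFactorial k * Nat.factorial (m - 1) = Nat.factorial (k + m - 1) := by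
    have h := Nat.factorial_mul_ascFactorial (m - 1) k
    rw [show m - 1 + 1 = m by omega] at h
    rw [Nat.mul_comm, h]
    congr 1
    omega
  have I2 : (k + m).choose (m - 1) * Nat.factorial (m - 1) * Nat.factorial (k + 1)
      = Nat.factorial (k + m) := by
    have h := Nat.choose_mul_factorial_mul_factorial (show m - 1 ≤ k + m by omega)
    rwa [show k + m - (m - 1) = k + 1 by omega] at h
  have I3 : (k + m - 1).choose (m - 1) * Nat.factorial (m - 1) * Nat.factorial k
      = Nat.factorial (k + m - 1) := by
    have h := Nat.choose_mul_factorial_mul_factorial (show m - 1 ≤ k + m - 1 by omega)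
    rwa [show k + m - 1 - (m - 1) = k by omega] at h
  have F1 : Nat.factorial (k + m) = (k + m) * Nat.factorial (k + m - 1) := by
    conv_lhs => rw [show k + m = (k + m - 1) + 1 by omega]
    rw [Nat.factorial_succ]
    congr 1
    omega
  have F2 : Nat.factorial (k + 1) = (k + 1) * Nat.factorial k := Nat.factorial_succ k
  have hn2 : n ≤ 2 * (k + m) + (d - 2 * m) * (k + 1) := by
    obtain ⟨e, he⟩ : ∃ e, d = 2 * m + e := ⟨d - 2 * m, by omega⟩
    subst he hn
    rw [show 2 * m + e - 2 * m = e by omega]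
    nlinarith
  calc n * m.ascFactorial k * Nat.factorial (m - 1)
      = n * Nat.factorial (k + m - 1) := by rw [Nat.mul_assoc, I1]
    _ ≤ (2 * (k + m) + (d - 2 * m) * (k + 1)) * Nat.factorial (k + m - 1) :=
        Nat.mul_le_mul_right _ hn2
    _ = (2 * ((k + m).choose (m - 1)) + (d - 2 * m) * ((k + m - 1).choose (m - 1)))
        * Nat.factorial (k + 1) * Nat.factorial (m - 1) := by
        zify [hd] at I2 I3 F1 F2 ⊢
        linear_combination (-2 : ℤ) * F1 - 2 * I2 -
          ((d : ℤ) - 2 * m) * (k + 1) * I3 -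
          ((d : ℤ) - 2 * m) * ((k + m - 1).choose (m - 1) : ℤ) * ((Nat.factorial (m - 1) : ℤ)) * F2

/-- Key inequality for the lower bound of the multiplicity conjecture: for
`n > d ≥ 2m`, `m ≥ 2`,
`2·C(n-d+m, m-1) + (d-2m)·C(n-d+m-1, m-1) ≥ n·∏_{i=1}^{n-d}(m+i-1)/(n-d+1)!`. -/
theorem lower_bound_key_inequality (n d m : ℕ) (hm : 2 ≤ m) (hd : 2 * m ≤ d)
    (hnd : d < n) :
    (n : ℚ) * (∏ i ∈ Finset.Icc 1 (n - d), ((m : ℚ) + (i : ℚ) - 1)) /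
        (Nat.factorial (n - d + 1) : ℚ) ≤
      2 * ((n - d + m).choose (m - 1) : ℚ) +
        ((d : ℚ) - 2 * (m : ℚ)) * ((n - d + m - 1).choose (m - 1) : ℚ) := by
  set k := n - d with hkdef
  have hk : 1 ≤ k := by omega
  have hn : n = d + k := by omega
  rw [prod_eq_asc m k, div_le_iff₀ (by positivity)]
  have hcast : ((d : ℚ) - 2 * (m : ℚ)) = ((d - 2 * m : ℕ) : ℚ) := by
    rw [Nat.cast_sub hd]; push_cast; ring
  rw [hcast]
  have h := nat_key n d m k hm hd hn hk
  exact_mod_cast h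
end

section
/- Let $h_i = \binom{n-d+i-1}{i}$ for $0 \leq i \leq m-1$ and $h_i = 0$ for $m \leq i \leq d$, where $2 \leq m \leq \lfloor (d+1)/2 \rfloor$ and $n > d$. Define $h'_i = \sum_{j=0}^{i} h_j - \sum_{j=0}^{i} h_{d-j}$ for $0 \leq i \leq d-1$. Then $h'_i = \binom{n-d+i}{i}$ for $0 \leq i \leq m-2$, $h'_i = \binom{n-d+m-1}{m-1}$ for $m-1 \leq i \leq d-m$, and $h'_i = \binom{n-1-i}{d-1-i}$ for $d-m+1 \leq i \leq d-1$. In particular, the sequence $(h'_0,\ldots,h'_{d-1})$ is symmetric and unimodal. -/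
open Finset

private lemma chZ {a b c c' : ℕ} (h : a = b) (h' : c = c') :
    ((a.choose c : ℤ)) = ((b.choose c' : ℤ)) := by rw [h, h']

private lemma aux_sum (k : ℕ) : ∀ t, ∑ j ∈ Finset.range (t+1), ((k+j).choose j : ℤ)
    = ((k+t+1).choose t : ℤ) := by
  intro t
  induction t with
  | zero => simp
  | succ t ih =>
    rw [Finset.sum_range_succ, ih, show k+(t+1) = k+t+1 from by omega]
    exact_mod_cast (Nat.choose_succ_succ (k+t+1) t).symm

private lemma pascal_mono (k u : ℕ) :
    ((k+u+1).choose u : ℤ) ≤ ((k+u+2).choose (u+1) : ℤ) := by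
  have h : (k+u+1).choose u ≤ (k+u+1+1).choose (u+1) :=
    Nat.le.intro (Nat.choose_succ_succ (k+u+1) u).symm
  rw [show k+u+2 = k+u+1+1 from by omega]
  exact_mod_cast h

/-- The `h`-vector of the boundary sphere of a linear ball, computed from the `h`-vector
of the ball: with `hᵢ = C(n-d+i-1, i)` for `i ≤ m-1` and `hᵢ = 0` for `m ≤ i ≤ d`
(where `2 ≤ m ≤ ⌊(d+1)/2⌋`, `n > d`), the vector `h'ᵢ = ∑_{j≤i} hⱼ - ∑_{j≤i} h_{d-j}`
satisfies the stated piecewise formula, and is symmetric and unimodal. -/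
theorem h_vector_of_boundary_of_linear_ball (n d m : ℕ) (hm : 2 ≤ m)
    (hm' : m ≤ (d + 1) / 2) (hnd : d < n) (h h' : ℕ → ℤ)
    (hh1 : ∀ i, i ≤ m - 1 → h i = ((n - d + i - 1).choose i : ℤ))
    (hh2 : ∀ i, m ≤ i → i ≤ d → h i = 0)
    (hh' : ∀ i, h' i =
      (∑ j ∈ Finset.range (i + 1), h j) - ∑ j ∈ Finset.range (i + 1), h (d - j)) :
    (∀ i, i ≤ m - 2 → h' i = ((n - d + i).choose i : ℤ)) ∧
    (∀ i, m - 1 ≤ i → i ≤ d - m → h' i = ((n - d + m - 1).choose (m - 1) : ℤ)) ∧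
    (∀ i, d - m + 1 ≤ i → i ≤ d - 1 → h' i = ((n - 1 - i).choose (d - 1 - i) : ℤ)) ∧
    (∀ i, i ≤ d - 1 → h' i = h' (d - 1 - i)) ∧
    (∃ j, j ≤ d - 1 ∧ (∀ a b, a ≤ b → b ≤ j → h' a ≤ h' b) ∧
      (∀ a b, j ≤ a → a ≤ b → b ≤ d - 1 → h' b ≤ h' a)) := by
  obtain ⟨e, rfl⟩ : ∃ e, m = e + 2 := ⟨m - 2, by omega⟩
  obtain ⟨f, rfl⟩ : ∃ f, d = 2*e + 3 + f := ⟨d - (2*e+3), by omega⟩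
  obtain ⟨k, rfl⟩ : ∃ k, n = 2*e + 4 + f + k := ⟨n - (2*e+4+f), by omega⟩
  have hh1' : ∀ i, i ≤ e + 1 → h i = ((k+i).choose i : ℤ) := by
    intro i hi
    rw [hh1 i (by omega)]
    exact chZ (by omega) rfl
  have S1a : ∀ i, i ≤ e+1 → ∑ j ∈ Finset.range (i+1), h j = ((k+i+1).choose i : ℤ) := by
    intro i hi
    rw [Finset.sum_congr rfl
      (fun j hj => hh1' j (by have := Finset.mem_range.mp hj; omega))]
    exact aux_sum k i
  have S1b : ∀ i, e+1 ≤ i → i ≤ 2*e+2+f →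
      ∑ j ∈ Finset.range (i+1), h j = ((k+e+2).choose (e+1) : ℤ) := by
    intro i hi
    induction i, hi using Nat.le_induction with
    | base =>
      intro _
      rw [S1a (e+1) le_rfl]
      exact chZ (by omega) rfl
    | succ i hi ih =>
      intro hb
      rw [Finset.sum_range_succ, ih (by omega), hh2 (i+1) (by omega) (by omega), add_zero]
  have S2a : ∀ i, i ≤ e+f+1 → ∑ j ∈ Finset.range (i+1), h (2*e+3+f - j) = 0 := by
    intro i hi
    apply Finset.sum_eq_zero
    intro j hj
    have := Finset.mem_range.mp hj
    exact hh2 _ (by omega) (by omega)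
  have S2b : ∀ s, s ≤ e+1 → ∑ j ∈ Finset.range (e+f+2+s), h (2*e+3+f - j)
      = ((k+e+2).choose (e+1) : ℤ) - ((k+(e+1-s)+1).choose (e+1-s) : ℤ) := by
    intro s
    induction s with
    | zero =>
      intro _
      rw [show e+f+2+0 = e+f+1+1 from by omega, S2a (e+f+1) le_rfl]
      rw [show e+1-0 = e+1 from rfl, show k+(e+1)+1 = k+e+2 from by omega]
      ring
    | succ s ih =>
      intro hs
      rw [show e+f+2+(s+1) = (e+f+2+s)+1 from by omega, Finset.sum_range_succ,
        ih (by omega), show 2*e+3+f - (e+f+2+s) = e+1-s from by omega,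
        hh1' (e+1-s) (by omega)]
      obtain ⟨u, hu⟩ : ∃ u, e = s + u := ⟨e - s, by omega⟩
      subst hu
      rw [show s+u+1-s = u+1 from by omega, show s+u+1-(s+1) = u from by omega]
      rw [show k+(u+1)+1 = k+u+1+1 from by omega, show k+(u+1) = k+u+1 from by omega]
      have hp : ((k+u+1+1).choose (u+1) : ℤ)
          = ((k+u+1).choose u : ℤ) + ((k+u+1).choose (u+1) : ℤ) := by
        exact_mod_cast Nat.choose_succ_succ (k+u+1) u
      rw [hp]; ring
  have F1' : ∀ i, i ≤ e+1 → h' i = ((k+i+1).choose i : ℤ) := by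
    intro i hi
    rw [hh' i, S1a i hi, S2a i (by omega), sub_zero]
  have F2' : ∀ i, e+1 ≤ i → i ≤ e+f+1 → h' i = ((k+e+2).choose (e+1) : ℤ) := by
    intro i h1 h2
    rw [hh' i, S1b i h1 (by omega), S2a i (by omega), sub_zero]
  have F3' : ∀ i, e+f+2 ≤ i → i ≤ 2*e+2+f →
      h' i = ((k+(2*e+2+f-i)+1).choose (2*e+2+f-i) : ℤ) := by
    intro i h1 h2
    obtain ⟨s, rfl⟩ : ∃ s, i = e+f+1+s := ⟨i - (e+f+1), by omega⟩
    rw [hh' _, S1b _ (by omega) (by omega),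
      show e+f+1+s+1 = e+f+2+s from by omega, S2b s (by omega),
      show 2*e+2+f-(e+f+1+s) = e+1-s from by omega]
    ring
  refine ⟨?_, ?_, ?_, ?_, ⟨e+1, by omega, ?_, ?_⟩⟩
  · intro i hi
    rw [F1' i (by omega)]
    exact chZ (by omega) rfl
  · intro i h1 h2
    rw [F2' i (by omega) (by omega)]
    exact chZ (by omega) (by omega)
  · intro i h1 h2
    rw [F3' i (by omega) (by omega)]
    exact chZ (by omega) (by omega)
  · intro i hi
    rcases Nat.lt_or_ge i (e+1) with hc | hc
    · rw [F1' i (by omega), F3' (2*e+3+f-1-i) (by omega) (by omega)]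
      exact chZ (by omega) (by omega)
    · rcases Nat.lt_or_ge i (e+f+2) with hc2 | hc2
      · rw [F2' i (by omega) (by omega), F2' (2*e+3+f-1-i) (by omega) (by omega)]
      · rw [F3' i (by omega) (by omega), F1' (2*e+3+f-1-i) (by omega)]
        exact chZ (by omega) (by omega)
  · intro a b hab
    induction b, hab using Nat.le_induction with
    | base => intro _; exact le_refl _
    | succ b hb' ih =>
      intro hb
      have step : h' b ≤ h' (b+1) := by
        rw [F1' b (by omega), F1' (b+1) (by omega),
          show k+(b+1)+1 = k+b+2 from by omega]
        exact pascal_mono k b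
      exact le_trans (ih (by omega)) step
  · intro a b ha hab
    induction b, hab using Nat.le_induction with
    | base => intro _; exact le_refl _
    | succ b hb' ih =>
      intro hb
      have step : h' (b+1) ≤ h' b := by
        rcases Nat.lt_or_ge (b+1) (e+f+2) with hc | hc
        · rw [F2' b (by omega) (by omega), F2' (b+1) (by omega) (by omega)]
        · rcases Nat.eq_or_lt_of_le hc with hc2 | hc2
          · rw [F2' b (by omega) (by omega), F3' (b+1) (by omega) (by omega),
              show 2*e+2+f-(b+1) = e from by omega]
            exact pascal_mono k e
          · rw [F3' b (by omega) (by omega), F3' (b+1) (by omega) (by omega),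
              show 2*e+2+f-b = (2*e+2+f-(b+1))+1 from by omega,
              show k+((2*e+2+f-(b+1))+1)+1 = k+(2*e+2+f-(b+1))+2 from by omega]
            exact pascal_mono k _
      exact le_trans step (ih (by omega))
end

section
/- Let $1 \leq r \leq m-1 \leq n-1$. There exists a non-flippable facet of $\Delta_r$ (the simplicial complex of the initial ideal of the $(r+1)$-minors of a generic $m\times n$ matrix) with exactly $t$ corners if and only if $r \leq t \leq r(m-r)$. -/
open Finset

section Defs

variable {V : Type*} [Fintype V] [DecidableEq V]

/-- An (abstract) simplicial complex on the vertex type `V`, with every element of `V`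
a vertex. -/
def IsComplexOn (Δ : Set (Finset V)) : Prop :=
  (∀ v : V, {v} ∈ Δ) ∧ ∀ F ∈ Δ, ∀ G, G ⊆ F → G ∈ Δ

/-- The number of faces of `Δ` of cardinality `i` (i.e. of dimension `i - 1`). -/
noncomputable def faceCount (Δ : Set (Finset V)) (i : ℕ) : ℕ :=
  {F ∈ Δ | F.card = i}.ncard

/-- The geometric realization of `Δ`, inside `ℝ^V`. -/
def realization (Δ : Set (Finset V)) : Set (EuclideanSpace ℝ V) :=
  { f | (∀ v, 0 ≤ f v) ∧ (∑ v, f v) = 1 ∧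
      ∃ F ∈ Δ, (∀ v, v ∈ F ↔ f v ≠ 0) }

/-- `Δ` is a `k`-dimensional ball: its geometric realization is homeomorphic to the
closed unit ball of `ℝ^k`. -/
def IsBall (k : ℕ) (Δ : Set (Finset V)) : Prop :=
  Nonempty (realization Δ ≃ₜ (Metric.closedBall (0 : EuclideanSpace ℝ (Fin k)) 1))

/-- `Δ` is a `k`-dimensional sphere: its geometric realization is homeomorphic to the
unit sphere of `ℝ^(k+1)`. -/
def IsSphere (k : ℕ) (Δ : Set (Finset V)) : Prop :=
  Nonempty (realization Δ ≃ₜ (Metric.sphere (0 : EuclideanSpace ℝ (Fin (k+1))) 1))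

/-- `Δ` is pure with facets of cardinality `d` and shellable, as witnessed by a shelling
order `L` on its facets. -/
def IsShellable (d : ℕ) (Δ : Set (Finset V)) : Prop :=
  ∃ L : List (Finset V), L.Nodup ∧
    (∀ F, F ∈ L ↔ (F ∈ Δ ∧ F.card = d)) ∧
    (∀ F ∈ Δ, ∃ G ∈ L, F ⊆ G) ∧
    ∀ (i j : ℕ) (hi : i < L.length) (hj : j < i),
      ∃ k, ∃ hk : k < i, ∃ v ∈ L[i], (L[k]'(by omega)) ∩ L[i] = (L[i]).erase v ∧
        (L[j]'(by omega)) ∩ L[i] ⊆ (L[k]'(by omega)) ∩ L[i]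

/-- The boundary complex of a pure `(d-1)`-dimensional complex `Δ` (facets of
cardinality `d`): faces contained in some face of cardinality `d - 1` which lies in
exactly one facet. -/
def boundaryComplex (d : ℕ) (Δ : Set (Finset V)) : Set (Finset V) :=
  { F | F ∈ Δ ∧ ∃ F' ∈ Δ, F ⊆ F' ∧ F'.card = d - 1 ∧
      ∃! G, G ∈ Δ ∧ G.card = d ∧ F' ⊆ G }

variable (K : Type*) [Field K]

/-- The Stanley–Reisner ideal of `Δ` in `K[x_v : v ∈ V]`. -/
noncomputable def SRideal (Δ : Set (Finset V)) : Ideal (MvPolynomial V K) :=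
  Ideal.span { m | ∃ F : Finset V, F ∉ Δ ∧ m = ∏ v ∈ F, MvPolynomial.X v }

/-- A minimal graded free resolution of `S/I` over `S = K[x_v : v ∈ V]`, recorded by
its Betti data: ranks `b i`, shifts `deg i`, and differentials `d i` given as
`S`-linear maps whose matrix entries are homogeneous of the appropriate degrees and
lie in the graded maximal ideal. -/
structure MinFreeRes (I : Ideal (MvPolynomial V K)) where
  b : ℕ → ℕ
  deg : (i : ℕ) → Fin (b i) → ℕ
  d : (i : ℕ) → ((Fin (b (i+1)) → MvPolynomial V K) →ₗ[MvPolynomial V K]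
        (Fin (b i) → MvPolynomial V K))
  aug : (Fin (b 0) → MvPolynomial V K) →ₗ[MvPolynomial V K] (MvPolynomial V K ⧸ I)
  b_zero : b 0 = 1
  deg_zero : ∀ k, deg 0 k = 0
  finite_length : ∃ p, ∀ i, p < i → b i = 0
  homogeneous : ∀ i l k, ((d i (Pi.single l 1)) k).IsHomogeneous (deg (i+1) l - deg i k)
  minimal : ∀ i l k, MvPolynomial.constantCoeff ((d i (Pi.single l 1)) k) = 0
  aug_surjective : Function.Surjective aug
  exact_zero : Function.Exact (d 0) aug
  exact : ∀ i, Function.Exact (d (i+1)) (d i)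

/-- The minimal shift `m_i` of a resolution. -/
noncomputable def MinFreeRes.minShift {I : Ideal (MvPolynomial V K)}
    (R : MinFreeRes K I) (i : ℕ) : ℕ := sInf (Set.range (R.deg i))

/-- The maximal shift `M_i` of a resolution. -/
noncomputable def MinFreeRes.maxShift {I : Ideal (MvPolynomial V K)}
    (R : MinFreeRes K I) (i : ℕ) : ℕ := sSup (Set.range (R.deg i))

/-- `I` has a linear resolution: it is generated in some single degree `m` and all
shifts in its minimal free resolution satisfy `Mᵢ = m + i` (i.e. the `i`-th free module
in the resolution of `S/I` is generated in degree `m + i - 1`). -/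
def HasLinearResolution (I : Ideal (MvPolynomial V K)) : Prop :=
  ∃ m : ℕ, ∀ (R : MinFreeRes K I) (i : ℕ) (k : Fin (R.b (i+1))), R.deg (i+1) k = m + i

end Defs

section Paths

/-- The lattice points of the `m × n` grid associated to a set of matrix positions,
using 1-based integer coordinates. -/
def encGrid {m n : ℕ} (G : Finset (Fin m × Fin n)) : Finset (ℤ × ℤ) :=
  G.image (fun v => ((v.1 : ℤ) + 1, (v.2 : ℤ) + 1))

/-- `C` is a path (saturated chain) in the `m × n` grid from `(a, n)` to `(m, b)`, i.e.
a staircase walk from `(m, b)` to `(a, n)` whose steps decrease the row index or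
increase the column index by one. -/
def IsPathE (m n : ℕ) (C : Finset (ℤ × ℤ)) (a b : ℤ) : Prop :=
  ∃ (L : ℕ) (f : ℕ → ℤ × ℤ), f 0 = ((m : ℤ), b) ∧ f L = (a, (n : ℤ)) ∧
    (∀ k, k < L →
      ((f (k+1)).1 = (f k).1 - 1 ∧ (f (k+1)).2 = (f k).2) ∨
      ((f (k+1)).1 = (f k).1 ∧ (f (k+1)).2 = (f k).2 + 1)) ∧
    C = (Finset.range (L + 1)).image f

/-- `C : Fin r → _` is a family of pairwise disjoint paths, `C i` running from
`(a i, n)` to `(m, b i)`; these are exactly the (decompositions of) facets of the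
simplicial complex `Δ_σ` of the initial ideal of the determinantal ideal `I_σ`,
`σ = [a₁,…,a_r | b₁,…,b_r]`. -/
def IsFacetDecomp (m n r : ℕ) (a b : Fin r → ℤ) (C : Fin r → Finset (ℤ × ℤ)) : Prop :=
  (∀ i, IsPathE m n (C i) (a i) (b i)) ∧
    ∀ i j, i ≠ j → Disjoint (C i) (C j)

/-- The simplicial complex `Δ_σ` on the vertex set `[m] × [n]`: its faces are the
subsets of unions of `r` pairwise disjoint paths from `(aᵢ, n)` to `(m, bᵢ)`. -/
def DeltaSigma (m n r : ℕ) (a b : Fin r → ℤ) : Set (Finset (Fin m × Fin n)) :=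
  { G | ∃ C : Fin r → Finset (ℤ × ℤ), IsFacetDecomp m n r a b C ∧
      encGrid G ⊆ Finset.univ.biUnion C }

/-- The corners of a path `C`: points `(i,j) ∈ C` with `(i-1,j) ∈ C` and
`(i,j-1) ∈ C`. -/
def pathCorners (C : Finset (ℤ × ℤ)) : Finset (ℤ × ℤ) :=
  C.filter (fun v => (v.1 - 1, v.2) ∈ C ∧ (v.1, v.2 - 1) ∈ C)

/-- The set `𝒞(F)` of corners of the paths of a facet decomposition `C`. -/
def cornersOf {r : ℕ} (C : Fin r → Finset (ℤ × ℤ)) : Finset (ℤ × ℤ) :=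
  Finset.univ.biUnion (fun i => pathCorners (C i))

/-- A facet (decomposition) `C` of `Δ_σ` is non-flippable if the only facet whose
corner set contains `𝒞(F)` is `F` itself. -/
def NonFlippable (m n r : ℕ) (a b : Fin r → ℤ) (C : Fin r → Finset (ℤ × ℤ)) : Prop :=
  ∀ C' : Fin r → Finset (ℤ × ℤ), IsFacetDecomp m n r a b C' →
    cornersOf C ⊆ cornersOf C' →
    Finset.univ.biUnion C' = Finset.univ.biUnion C

end Paths

set_option linter.unusedSectionVars false

namespace NFP

structure PW (m n : ℕ) (C : Finset (ℤ × ℤ)) (a b : ℤ) where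
  L : ℕ
  f : ℕ → ℤ × ℤ
  h0 : f 0 = ((m : ℤ), b)
  hL : f L = (a, (n : ℤ))
  hstep : ∀ k, k < L →
      ((f (k+1)).1 = (f k).1 - 1 ∧ (f (k+1)).2 = (f k).2) ∨
      ((f (k+1)).1 = (f k).1 ∧ (f (k+1)).2 = (f k).2 + 1)
  hset : C = (Finset.range (L + 1)).image f

lemma isPathE_pw {m n : ℕ} {C : Finset (ℤ × ℤ)} {a b : ℤ} (h : IsPathE m n C a b) :
    Nonempty (PW m n C a b) := by
  obtain ⟨L, f, h0, hL, hstep, hset⟩ := h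
  exact ⟨⟨L, f, h0, hL, hstep, hset⟩⟩

namespace PW

variable {m n : ℕ} {C : Finset (ℤ × ℤ)} {a b : ℤ} (W : PW m n C a b)
include W

lemma diag : ∀ k, k ≤ W.L → (W.f k).2 - (W.f k).1 = k + b - m := by
  intro k
  induction k with
  | zero => intro _; simp [W.h0]
  | succ k ih =>
    intro hk
    have h1 := ih (by omega)
    rcases W.hstep k (by omega) with h | h <;> push_cast <;> omega

lemma mono : ∀ k l, k ≤ l → l ≤ W.L → (W.f l).1 ≤ (W.f k).1 ∧ (W.f k).2 ≤ (W.f l).2 := by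
  intro k l
  induction l with
  | zero =>
    intro hkl _
    have hk : k = 0 := by omega
    subst hk; exact ⟨le_refl _, le_refl _⟩
  | succ l ih =>
    intro hkl hl
    rcases Nat.eq_or_lt_of_le hkl with h | h
    · subst h; exact ⟨le_refl _, le_refl _⟩
    · have h2 := ih (by omega) (by omega)
      rcases W.hstep l (by omega) with h3 | h3 <;>
        exact ⟨by omega, by omega⟩

lemma mem_iff {x y : ℤ} : (x, y) ∈ C ↔ ∃ k, k ≤ W.L ∧ W.f k = (x, y) := by
  simp only [W.hset, mem_image, mem_range]
  constructor
  · rintro ⟨k, hk, h⟩; exact ⟨k, by omega, h⟩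
  · rintro ⟨k, hk, h⟩; exact ⟨k, by omega, h⟩

lemma index {x y : ℤ} (h : (x, y) ∈ C) :
    ∃ k, k ≤ W.L ∧ W.f k = (x, y) ∧ (k : ℤ) = y - x + m - b := by
  obtain ⟨k, hk, hf⟩ := W.mem_iff.1 h
  refine ⟨k, hk, hf, ?_⟩
  have := W.diag k hk
  rw [hf] at this; simp at this; omega

lemma Llen : (W.L : ℤ) = m + n - a - b := by
  have := W.diag W.L (le_refl _)
  rw [W.hL] at this; simp at this; omega

lemma start : ((m : ℤ), b) ∈ C := W.mem_iff.2 ⟨0, Nat.zero_le _, W.h0⟩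

lemma last : ((a : ℤ), (n : ℤ)) ∈ C := W.mem_iff.2 ⟨W.L, le_refl _, W.hL⟩

lemma bounds {x y : ℤ} (h : (x, y) ∈ C) : a ≤ x ∧ x ≤ m ∧ b ≤ y ∧ y ≤ n := by
  obtain ⟨k, hk, hf, -⟩ := W.index h
  have h1 := W.mono 0 k (Nat.zero_le _) hk
  have h2 := W.mono k W.L hk (le_refl _)
  rw [W.h0, hf] at h1
  rw [W.hL, hf] at h2
  simp at h1 h2
  exact ⟨h2.1, h1.1, h1.2, h2.2⟩

lemma rowConvex {x y1 y2 y : ℤ} (h1 : (x, y1) ∈ C) (h2 : (x, y2) ∈ C)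
    (hy1 : y1 ≤ y) (hy2 : y ≤ y2) : (x, y) ∈ C := by
  obtain ⟨k1, hk1, hf1, hi1⟩ := W.index h1
  obtain ⟨k2, hk2, hf2, hi2⟩ := W.index h2
  set k : ℕ := k1 + (y - y1).toNat with hkdef
  have hk12 : k1 ≤ k ∧ k ≤ k2 := by omega
  have hd := W.diag k (by omega)
  have hm1 := W.mono k1 k hk12.1 (by omega)
  have hm2 := W.mono k k2 hk12.2 hk2
  rw [hf1] at hm1; rw [hf2] at hm2
  have hx : (W.f k).1 = x := by simp at hm1 hm2; omega
  have hy : (W.f k).2 = y := by omega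
  refine W.mem_iff.2 ⟨k, by omega, ?_⟩
  rw [Prod.ext_iff]; exact ⟨hx, hy⟩

lemma rowExists {x : ℤ} (h1 : a ≤ x) (h2 : x ≤ m) : ∃ y, (x, y) ∈ C := by
  classical
  have hne : ((Finset.range (W.L + 1)).filter (fun k => x ≤ (W.f k).1)).Nonempty := by
    refine ⟨0, ?_⟩
    simp [W.h0]; omega
  obtain ⟨k, hk, hmax⟩ := Finset.exists_max_image
    ((Finset.range (W.L + 1)).filter (fun k => x ≤ (W.f k).1)) id hne
  simp only [mem_filter, mem_range] at hk
  rcases eq_or_lt_of_le hk.2 with h | h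
  · exact ⟨(W.f k).2, W.mem_iff.2 ⟨k, by omega, by rw [Prod.ext_iff]; exact ⟨h.symm, rfl⟩⟩⟩
  · exfalso
    have hkL : k ≠ W.L := by
      intro hkl
      have := W.hL
      rw [hkl, this] at h; simp at h; omega
    have hk1 : k + 1 ∈ (Finset.range (W.L + 1)).filter (fun k => x ≤ (W.f k).1) := by
      simp only [mem_filter, mem_range]
      rcases W.hstep k (by omega) with h3 | h3 <;> constructor <;> omega
    have := hmax (k+1) hk1
    simp at this

lemma pred {x y : ℤ} (h : (x, y) ∈ C) (hne : ¬(x = m ∧ y = b)) :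
    (x + 1, y) ∈ C ∨ (x, y - 1) ∈ C := by
  obtain ⟨k, hk, hf, hi⟩ := W.index h
  have hk0 : k ≠ 0 := by
    intro h0; rw [h0, W.h0] at hf
    rw [Prod.ext_iff] at hf; simp at hf; exact hne ⟨hf.1.symm, hf.2.symm⟩
  have hstep := W.hstep (k - 1) (by omega)
  have hkk : k - 1 + 1 = k := by omega
  rw [hkk, hf] at hstep
  rcases hstep with h3 | h3
  · left
    refine W.mem_iff.2 ⟨k - 1, by omega, ?_⟩
    rw [Prod.ext_iff]; simp at h3 ⊢; omega
  · right
    refine W.mem_iff.2 ⟨k - 1, by omega, ?_⟩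
    rw [Prod.ext_iff]; simp at h3 ⊢; omega

lemma succ {x y : ℤ} (h : (x, y) ∈ C) (hne : ¬(x = a ∧ y = n)) :
    (x - 1, y) ∈ C ∨ (x, y + 1) ∈ C := by
  obtain ⟨k, hk, hf, hi⟩ := W.index h
  have hkL : k ≠ W.L := by
    intro h0; rw [h0, W.hL] at hf
    rw [Prod.ext_iff] at hf; simp at hf; exact hne ⟨hf.1.symm, hf.2.symm⟩
  have hstep := W.hstep k (by omega)
  rw [hf] at hstep
  rcases hstep with h3 | h3
  · left
    refine W.mem_iff.2 ⟨k + 1, by omega, ?_⟩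
    rw [Prod.ext_iff]; simp at h3 ⊢; omega
  · right
    refine W.mem_iff.2 ⟨k + 1, by omega, ?_⟩
    rw [Prod.ext_iff]; simp at h3 ⊢; omega

lemma enter {x : ℤ} (hx : x < m) :
    ∀ y, (x, y) ∈ C → ∃ y0, y0 ≤ y ∧ (x, y0) ∈ C ∧ (x + 1, y0) ∈ C := by
  suffices H : ∀ k : ℕ, ∀ y, (y - b).toNat = k → (x, y) ∈ C →
      ∃ y0, y0 ≤ y ∧ (x, y0) ∈ C ∧ (x + 1, y0) ∈ C by
    intro y hm; exact H _ y rfl hm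
  intro k
  induction k using Nat.strong_induction_on with
  | _ k ih =>
    intro y hk hm
    have hb : b ≤ y := (W.bounds hm).2.2.1
    rcases W.pred hm (by rintro ⟨h1, h2⟩; omega) with h' | h'
    · exact ⟨y, le_refl _, hm, h'⟩
    · have hb' : b ≤ y - 1 := (W.bounds h').2.2.1
      obtain ⟨y0, h1, h2, h3⟩ := ih ((y - 1 - b).toNat) (by omega) (y - 1) rfl h'
      exact ⟨y0, by omega, h2, h3⟩

lemma exit {x : ℤ} (hx : a < x) :
    ∀ y, (x, y) ∈ C → ∃ y1, y ≤ y1 ∧ (x, y1) ∈ C ∧ (x - 1, y1) ∈ C := by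
  suffices H : ∀ k : ℕ, ∀ y, ((n : ℤ) - y).toNat = k → (x, y) ∈ C →
      ∃ y1, y ≤ y1 ∧ (x, y1) ∈ C ∧ (x - 1, y1) ∈ C by
    intro y hm; exact H _ y rfl hm
  intro k
  induction k using Nat.strong_induction_on with
  | _ k ih =>
    intro y hk hm
    have hb : y ≤ n := (W.bounds hm).2.2.2
    rcases W.succ hm (by rintro ⟨h1, h2⟩; omega) with h' | h'
    · exact ⟨y, le_refl _, hm, h'⟩
    · have hb' : y + 1 ≤ n := (W.bounds h').2.2.2
      obtain ⟨y1, h1, h2, h3⟩ := ih (((n : ℤ) - (y + 1)).toNat) (by omega) (y + 1) rfl h'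
      exact ⟨y1, by omega, h2, h3⟩

lemma n4g {x s x' t : ℤ} (h1 : (x, s) ∈ C) (h2 : (x', t) ∈ C) (hx : x < x') : t ≤ s := by
  obtain ⟨k1, hk1, hf1, hi1⟩ := W.index h1
  obtain ⟨k2, hk2, hf2, hi2⟩ := W.index h2
  by_cases h : k1 ≤ k2
  · have := W.mono k1 k2 h hk2
    rw [hf1, hf2] at this; simp at this; omega
  · have := W.mono k2 k1 (by omega) hk1
    rw [hf1, hf2] at this; simp at this; omega

lemma diagUnique {x y x' y' : ℤ} (h1 : (x, y) ∈ C) (h2 : (x', y') ∈ C)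
    (hd : y - x = y' - x') : x = x' ∧ y = y' := by
  obtain ⟨k1, hk1, hf1, hi1⟩ := W.index h1
  obtain ⟨k2, hk2, hf2, hi2⟩ := W.index h2
  have : k1 = k2 := by omega
  rw [this, hf2] at hf1
  rw [Prod.ext_iff] at hf1; simp at hf1; omega

lemma card_eq : C.card = ((m : ℤ) + n - a - b + 1).toNat := by
  rw [W.hset, Finset.card_image_of_injOn]
  · rw [Finset.card_range]
    have := W.Llen; omega
  · intro k hk l hl hkl
    simp only [Finset.coe_range, Set.mem_Iio] at hk hl
    have h1 := W.diag k (by omega)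
    have h2 := W.diag l (by omega)
    rw [hkl] at h1
    omega

end PW

noncomputable def cellsW (a b mz nz : ℤ) (w : ℤ → ℤ) : Finset (ℤ × ℤ) :=
  ((Finset.Icc a mz) ×ˢ (Finset.Icc b nz)).filter
    (fun v => (if v.1 = mz then b else w (v.1 + 1)) ≤ v.2 ∧ v.2 ≤ w v.1)

structure WOK (a b mz nz : ℤ) (w : ℤ → ℤ) : Prop where
  ham : a ≤ mz
  hbn : b ≤ nz
  hwa : w a = nz
  hwm : b ≤ w mz
  hmono : ∀ x, a ≤ x → x < mz → w (x + 1) ≤ w x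

namespace WOK

variable {a b mz nz : ℤ} {w : ℤ → ℤ} (H : WOK a b mz nz w)
include H

lemma anti : ∀ x x', a ≤ x → x ≤ x' → x' ≤ mz → w x' ≤ w x := by
  intro x x' hx hxx hxm
  suffices HH : ∀ k : ℕ, ∀ x', a ≤ x' → x' ≤ mz → (x' - x).toNat = k → x ≤ x' → w x' ≤ w x by
    exact HH _ x' (by omega) hxm rfl hxx
  intro k
  induction k with
  | zero => intro x' _ _ hk hxx'; have : x' = x := by omega
            rw [this]
  | succ k ih =>
    intro x' hax hxm hk hxx'
    have h1 : w x' ≤ w (x' - 1) := by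
      have := H.hmono (x' - 1) (by omega) (by omega)
      simpa using this
    have h2 := ih (x' - 1) (by omega) (by omega) (by omega) (by omega)
    omega

lemma wub : ∀ x, a ≤ x → x ≤ mz → w x ≤ nz := by
  intro x hx hxm
  have h1 := H.anti a x (le_refl _) hx hxm
  have h2 := H.hwa
  omega

lemma memW {x y : ℤ} : (x, y) ∈ cellsW a b mz nz w ↔
    a ≤ x ∧ x ≤ mz ∧ (if x = mz then b else w (x + 1)) ≤ y ∧ y ≤ w x := by
  unfold cellsW
  simp only [mem_filter, mem_product, mem_Icc]
  constructor
  · rintro ⟨⟨⟨h1, h2⟩, h3, h4⟩, h5, h6⟩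
    exact ⟨h1, h2, h5, h6⟩
  · rintro ⟨h1, h2, h3, h4⟩
    refine ⟨⟨⟨h1, h2⟩, ?_, ?_⟩, h3, h4⟩
    · split_ifs at h3 with h
      · omega
      · have := H.anti (x + 1) mz (by omega) (by omega) (le_refl _)
        have := H.hwm
        omega
    · have := H.wub x h1 h2
      omega

lemma memW_box {x y : ℤ} (h : (x, y) ∈ cellsW a b mz nz w) : b ≤ y ∧ y ≤ nz := by
  unfold cellsW at h
  simp only [mem_filter, mem_product, mem_Icc] at h
  exact h.1.2

end WOK

def wf (b mz : ℤ) (w : ℤ → ℤ) : ℕ → ℤ × ℤ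
  | 0 => (mz, b)
  | (k+1) =>
    if (wf b mz w k).2 < w (wf b mz w k).1
    then ((wf b mz w k).1, (wf b mz w k).2 + 1)
    else ((wf b mz w k).1 - 1, (wf b mz w k).2)

lemma buildPath (m n : ℕ) (a b : ℤ) (w : ℤ → ℤ) (H : WOK a b (m : ℤ) (n : ℤ) w) :
    IsPathE m n (cellsW a b (m : ℤ) (n : ℤ) w) a b := by
  classical
  set L : ℕ := ((m : ℤ) + (n : ℤ) - a - b).toNat with hLdef
  have hL0 : (L : ℤ) = (m : ℤ) + (n : ℤ) - a - b := by
    have h1 : a ≤ (m : ℤ) := H.ham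
    have h2 : b ≤ (n : ℤ) := H.hbn
    omega
  have hW : ∀ k : ℕ, wf b (m : ℤ) w (k + 1) =
      if (wf b (m : ℤ) w k).2 < w (wf b (m : ℤ) w k).1
      then ((wf b (m : ℤ) w k).1, (wf b (m : ℤ) w k).2 + 1)
      else ((wf b (m : ℤ) w k).1 - 1, (wf b (m : ℤ) w k).2) := fun k => rfl
  have hdiag : ∀ k : ℕ, (wf b (m : ℤ) w k).2 - (wf b (m : ℤ) w k).1 = k + b - m := by
    intro k
    induction k with
    | zero => simp [wf]
    | succ k ih =>
      rw [hW k]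
      split_ifs <;> simp <;> push_cast <;> omega
  have hinv : ∀ k : ℕ, k ≤ L → wf b (m : ℤ) w k ∈ cellsW a b (m : ℤ) (n : ℤ) w := by
    intro k
    induction k with
    | zero =>
      intro _
      have h0 : wf b (m : ℤ) w 0 = ((m : ℤ), b) := rfl
      rw [h0, H.memW]
      exact ⟨H.ham, le_refl _, by simp, by simp [H.hwm]⟩
    | succ k ih =>
      intro hk
      have hmem := ih (by omega)
      have hd := hdiag k
      obtain ⟨X, Y, hXY⟩ : ∃ X Y, wf b (m : ℤ) w k = (X, Y) := ⟨_, _, rfl⟩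
      rw [hXY] at hmem hd
      rw [H.memW] at hmem
      obtain ⟨h1, h2, h3, h4⟩ := hmem
      by_cases hc : Y < w X
      · have heq : wf b (m : ℤ) w (k + 1) = (X, Y + 1) := by
          rw [hW k, hXY]; simp [hc]
        rw [heq, H.memW]
        refine ⟨h1, h2, ?_, by omega⟩
        split_ifs at h3 ⊢ <;> omega
      · have hy : Y = w X := by omega
        have hxa : a < X := by
          rcases eq_or_lt_of_le h1 with h | h
          · exfalso
            rw [← h, H.hwa] at hy
            omega
          · exact h
        have heq : wf b (m : ℤ) w (k + 1) = (X - 1, Y) := by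
          rw [hW k, hXY]; simp [hc]
        rw [heq, H.memW]
        refine ⟨by omega, by omega, ?_, ?_⟩
        · rw [if_neg (by omega : ¬(X - 1 = (m : ℤ)))]
          have h5 : X - 1 + 1 = X := by ring
          rw [h5]
          omega
        · have h6 := H.hmono (X - 1) (by omega) (by omega)
          have h5 : X - 1 + 1 = X := by ring
          rw [h5] at h6
          omega
  have hsurj : ∀ k : ℕ, ∀ x y : ℤ, (x, y) ∈ cellsW a b (m : ℤ) (n : ℤ) w →
      (y - x + m - b).toNat = k → wf b (m : ℤ) w k = (x, y) := by
    intro k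
    induction k using Nat.strong_induction_on with
    | _ k ih =>
      intro x y hmem hk
      have hbox := H.memW_box hmem
      rw [H.memW] at hmem
      obtain ⟨h1, h2, h3, h4⟩ := hmem
      rcases Nat.eq_zero_or_pos k with hk0 | hkpos
      · subst hk0
        have hx : x = (m : ℤ) ∧ y = b := by
          split_ifs at h3 with h
          · constructor <;> omega
          · exfalso
            have hwge : b ≤ w (x + 1) := by
              have h5 := H.anti (x + 1) (m : ℤ) (by omega) (by omega) (le_refl _)
              have h6 := H.hwm
              omega
            omega
        rw [hx.1, hx.2]
        rfl
      · by_cases hcase : (if x = (m : ℤ) then b else w (x + 1)) < y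
        · have hm' : (x, y - 1) ∈ cellsW a b (m : ℤ) (n : ℤ) w := by
            rw [H.memW]
            exact ⟨h1, h2, by omega, by omega⟩
          have hprev := ih (k - 1) (by omega) x (y - 1) hm' (by omega)
          have hfk : k = (k - 1) + 1 := by omega
          have hcond : ((x : ℤ), y - 1).2 < w ((x : ℤ), y - 1).1 := by
            show y - 1 < w x
            omega
          rw [hfk, hW, hprev, if_pos hcond]
          show ((x : ℤ), y - 1 + 1) = (x, y)
          congr 1
          omega
        · have hyl : y = (if x = (m : ℤ) then b else w (x + 1)) := by omega
          by_cases hxm : x = (m : ℤ)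
          · exfalso
            rw [if_pos hxm] at hyl
            subst hxm
            omega
          · rw [if_neg hxm] at hyl
            have hm' : (x + 1, y) ∈ cellsW a b (m : ℤ) (n : ℤ) w := by
              rw [H.memW]
              refine ⟨by omega, by omega, ?_, by omega⟩
              split_ifs with h
              · have h5 := H.anti (x + 1) (m : ℤ) (by omega) (by omega) (le_refl _)
                have h6 := H.hwm
                omega
              · have h5 := H.hmono (x + 1) (by omega) (by omega)
                omega
            have hprev := ih (k - 1) (by omega) (x + 1) y hm' (by omega)
            have hfk : k = (k - 1) + 1 := by omega
            have hcond : ¬((x + 1, y).2 < w ((x + 1, y)).1) := by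
              show ¬(y < w (x + 1))
              omega
            rw [hfk, hW, hprev, if_neg hcond]
            show ((x : ℤ) + 1 - 1, y) = (x, y)
            congr 1
            omega
  refine ⟨L, wf b (m : ℤ) w, rfl, ?_, ?_, ?_⟩
  · have hmem := hinv L (le_refl _)
    have hd := hdiag L
    rw [H.memW] at hmem
    obtain ⟨h1, h2, h3, h4⟩ := hmem
    have hub : w (wf b (m : ℤ) w L).1 ≤ (n : ℤ) := H.wub _ h1 h2
    have hx : (wf b (m : ℤ) w L).1 = a := by omega
    have hy : (wf b (m : ℤ) w L).2 = (n : ℤ) := by omega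
    rw [Prod.ext_iff]
    exact ⟨hx, hy⟩
  · intro k hkL
    by_cases hc : (wf b (m : ℤ) w k).2 < w (wf b (m : ℤ) w k).1
    · right
      rw [hW k, if_pos hc]
      exact ⟨rfl, rfl⟩
    · left
      rw [hW k, if_neg hc]
      exact ⟨rfl, rfl⟩
  · ext v
    obtain ⟨x, y⟩ := v
    simp only [Finset.mem_image, Finset.mem_range]
    constructor
    · intro hmem
      refine ⟨(y - x + m - b).toNat, ?_, hsurj _ x y hmem rfl⟩
      have hbox := H.memW_box hmem
      rw [H.memW] at hmem
      omega
    · rintro ⟨k, hk, hfk⟩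
      rw [← hfk]
      exact hinv k (by omega)

end NFP

namespace NFP

noncomputable def pwOf {m n : ℕ} {C : Finset (ℤ × ℤ)} {a b : ℤ} (h : IsPathE m n C a b) :
    PW m n C a b := (isPathE_pw h).some

lemma mem_pathCorners {C : Finset (ℤ × ℤ)} {x y : ℤ} :
    (x, y) ∈ pathCorners C ↔ (x, y) ∈ C ∧ (x - 1, y) ∈ C ∧ (x, y - 1) ∈ C := by
  simp [pathCorners]

lemma pathCorners_subset {C : Finset (ℤ × ℤ)} : pathCorners C ⊆ C :=
  Finset.filter_subset _ _

section PathLemmas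

variable {m n : ℕ} {C : Finset (ℤ × ℤ)} {a b : ℤ} (h : IsPathE m n C a b)
include h

lemma cornerBounds {x y : ℤ} (hc : (x, y) ∈ pathCorners C) :
    a + 1 ≤ x ∧ x ≤ m ∧ b + 1 ≤ y ∧ y ≤ n := by
  obtain W := pwOf h
  rw [mem_pathCorners] at hc
  obtain ⟨h1, h2, h3⟩ := hc
  have b1 := W.bounds h1
  have b2 := W.bounds h2
  have b3 := W.bounds h3
  omega

lemma cornerRowUnique {x y y' : ℤ} (hc : (x, y) ∈ pathCorners C)
    (hc' : (x, y') ∈ pathCorners C) : y = y' := by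
  obtain W := pwOf h
  rw [mem_pathCorners] at hc hc'
  have h1 := W.n4g hc.2.1 hc'.1 (by omega)
  have h2 := W.n4g hc'.2.1 hc.1 (by omega)
  omega

lemma cornerAntichain {x1 y1 x2 y2 : ℤ} (hc1 : (x1, y1) ∈ pathCorners C)
    (hc2 : (x2, y2) ∈ pathCorners C) (hx : x2 < x1) : y1 < y2 := by
  obtain W := pwOf h
  rw [mem_pathCorners] at hc1 hc2
  have h1 := W.n4g hc2.2.2 hc1.1 hx
  omega

lemma cornerAbove {x y : ℤ} (hm : (x, y) ∈ C) (hx : a + 1 ≤ x) (hy : b + 1 ≤ y) :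
    ∃ xc yc, (xc, yc) ∈ pathCorners C ∧ x ≤ xc ∧ y ≤ yc := by
  obtain W := pwOf h
  suffices H : ∀ k : ℕ, ∀ x y : ℤ, ((m : ℤ) - x).toNat = k → (x, y) ∈ C →
      a + 1 ≤ x → b + 1 ≤ y → ∃ xc yc, (xc, yc) ∈ pathCorners C ∧ x ≤ xc ∧ y ≤ yc by
    exact H _ x y rfl hm hx hy
  intro k
  induction k using Nat.strong_induction_on with
  | _ k ih =>
    intro x y hk hm hx hy
    have hbd := W.bounds hm
    rcases W.pred hm (by rintro ⟨h1, h2⟩; omega) with h' | h'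
    · have hbd' := W.bounds h'
      obtain ⟨xc, yc, hcc, hc1, hc2⟩ :=
        ih (((m : ℤ) - (x + 1)).toNat) (by omega) (x + 1) y rfl h' (by omega) hy
      exact ⟨xc, yc, hcc, by omega, hc2⟩
    · obtain ⟨y1, hy1, hm1, hm2⟩ := W.exit (by omega) y hm
      refine ⟨x, y1, ?_, le_refl _, hy1⟩
      rw [mem_pathCorners]
      refine ⟨hm1, hm2, ?_⟩
      rcases eq_or_lt_of_le hy1 with he | he
      · rw [← he]; exact h'
      · exact W.rowConvex hm hm1 (by omega) (by omega)

lemma hookOfNoCorners (hnc : pathCorners C = ∅) {x y : ℤ} (hm : (x, y) ∈ C)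
    (hx : a + 1 ≤ x) : y = b := by
  obtain W := pwOf h
  have hbd := W.bounds hm
  by_contra hne
  obtain ⟨xc, yc, hcc, -, -⟩ := cornerAbove h hm hx (by omega)
  rw [hnc] at hcc
  simp at hcc

lemma cornerBelow {xc yc x y : ℤ} (hc : (xc, yc) ∈ pathCorners C) (hm : (x, y) ∈ C)
    (hx : x < xc) : yc ≤ y := by
  obtain W := pwOf h
  rw [mem_pathCorners] at hc
  rcases eq_or_lt_of_le (by omega : x ≤ xc - 1) with he | he
  · by_contra hlt
    have h1 := W.n4g hm hc.2.2 (by omega)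
    have h2 : y = yc - 1 := by omega
    have h3 := W.diagUnique hm hc.1 (by omega)
    omega
  · have := W.n4g hm hc.2.1 (by omega)
    omega

end PathLemmas

section FacetLemmas

variable {m n r : ℕ} {C : Fin r → Finset (ℤ × ℤ)}
variable (hF : IsFacetDecomp m n r (fun i => (i : ℤ) + 1) (fun i => (i : ℤ) + 1) C)
include hF

lemma r_le_m (i : Fin r) : (r : ℤ) ≤ (m : ℤ) := by
  have hpos := i.pos
  obtain ⟨j, hj⟩ : ∃ j : Fin r, (j : ℕ) = r - 1 := ⟨⟨r - 1, by omega⟩, rfl⟩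
  have Wj : PW m n (C j) ((j : ℤ) + 1) ((j : ℤ) + 1) := pwOf (hF.1 j)
  have hb := (Wj.bounds Wj.start).1
  omega

lemma nest {i j : Fin r} (hij : (i : ℕ) < (j : ℕ)) {x y y' : ℤ}
    (hx : (j : ℤ) + 1 ≤ x) (h1 : (x, y) ∈ C i) (h2 : (x, y') ∈ C j) : y < y' := by
  have Wi : PW m n (C i) ((i : ℤ) + 1) ((i : ℤ) + 1) := pwOf (hF.1 i)
  have Wj : PW m n (C j) ((j : ℤ) + 1) ((j : ℤ) + 1) := pwOf (hF.1 j)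
  have hdisj := hF.2 i j (by intro he; rw [he] at hij; omega)
  suffices H : ∀ k : ℕ, ∀ x y y' : ℤ, ((m : ℤ) - x).toNat = k → (j : ℤ) + 1 ≤ x →
      (x, y) ∈ C i → (x, y') ∈ C j → y < y' by
    exact H _ x y y' rfl hx h1 h2
  intro k
  induction k using Nat.strong_induction_on with
  | _ k ih =>
    intro x y y' hk hx h1 h2
    have hb1 := Wi.bounds h1
    have hb2 := Wj.bounds h2
    by_contra hcon
    push_neg at hcon
    rcases eq_or_lt_of_le hb1.2.1 with hxm | hxm
    · rcases eq_or_lt_of_le hcon with he | he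
      · exact Finset.disjoint_left.mp hdisj h1 (he ▸ h2)
      · have hs' : (x, (i : ℤ) + 1) ∈ C i := by rw [hxm]; exact Wi.start
        have hmem : (x, y') ∈ C i := Wi.rowConvex hs' h1 (by omega) (by omega)
        exact Finset.disjoint_left.mp hdisj hmem h2
    · obtain ⟨y0, hy0, hm1, hm2⟩ := Wi.enter (by omega) y h1
      obtain ⟨y0', hy0', hm1', hm2'⟩ := Wj.enter (by omega) y' h2
      have hlt := ih (((m : ℤ) - (x + 1)).toNat) (by omega) (x + 1) y0 y0' rfl
        (by omega) hm2 hm2'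
      have hmem : (x, y') ∈ C i := Wi.rowConvex hm1 h1 (by omega) (by omega)
      exact Finset.disjoint_left.mp hdisj hmem h2

lemma nest' {i j : Fin r} (hij : (i : ℕ) < (j : ℕ)) {x y y' : ℤ}
    (hx : ((j : ℤ) + 1 ≤ x)) (h1 : (x, y) ∈ C i) (h2 : (x, y') ∈ C j) : y < y' :=
  nest hF hij hx h1 h2

lemma sing {i : Fin r} {x y : ℤ} (h1 : (x, y) ∈ C i) (hy : (i : ℤ) + 2 ≤ y) :
    x ≤ (m : ℤ) - r + ((i : ℤ) + 1) := by
  suffices H : ∀ k : ℕ, ∀ i : Fin r, r - 1 - (i : ℕ) = k → ∀ x y : ℤ,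
      (x, y) ∈ C i → (i : ℤ) + 2 ≤ y → x ≤ (m : ℤ) - r + ((i : ℤ) + 1) by
    exact H _ i rfl x y h1 hy
  intro k
  induction k using Nat.strong_induction_on with
  | _ k ih =>
    intro i hk x y h1 hy
    have Wi : PW m n (C i) ((i : ℤ) + 1) ((i : ℤ) + 1) := pwOf (hF.1 i)
    have hb1 := Wi.bounds h1
    have hrpos : 0 < r := i.pos
    have hilt : (i : ℕ) < r := i.isLt
    by_cases hlast : (i : ℕ) = r - 1
    · have hiz : (i : ℤ) = (r : ℤ) - 1 := by omega
      omega
    · have hr : (i : ℕ) + 1 < r := by omega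
      obtain ⟨i', hi'⟩ : ∃ i' : Fin r, (i' : ℕ) = (i : ℕ) + 1 := ⟨⟨(i : ℕ) + 1, hr⟩, rfl⟩
      have Wi' : PW m n (C i') ((i' : ℤ) + 1) ((i' : ℤ) + 1) := pwOf (hF.1 i')
      have hci' : ((i' : ℕ) : ℤ) = (i : ℤ) + 1 := by
        rw [hi']; push_cast; ring
      have hii' : (i : ℕ) < (i' : ℕ) := by omega
      have hrm := r_le_m hF i
      rcases le_or_gt x ((i : ℤ) + 1) with hxs | hxs
      · omega
      · have hxm : x < (m : ℤ) := by
          rcases eq_or_lt_of_le hb1.2.1 with hxm | hxm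
          · exfalso
            have hs' : (x, (i' : ℤ) + 1) ∈ C i' := by rw [hxm]; exact Wi'.start
            have := nest hF hii' (x := x) (by omega) h1 hs'
            omega
          · exact hxm
        obtain ⟨y1, hy1⟩ := Wi'.rowExists (x := x) (by omega) (by omega)
        obtain ⟨y0, hy0, hm1, hm2⟩ := Wi'.enter (by omega) y1 hy1
        have hlt := nest hF hii' (x := x) (by omega) h1 hm1
        have := ih (r - 1 - (i' : ℕ)) (by omega) i' rfl (x + 1) y0 hm2 (by omega)
        omega

end FacetLemmas
end NFP

namespace NFP

section Flip

variable {m n r : ℕ} {C : Fin r → Finset (ℤ × ℤ)}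
variable (hF : IsFacetDecomp m n r (fun i => (i : ℤ) + 1) (fun i => (i : ℤ) + 1) C)
include hF

lemma corner_disjoint {i j : Fin r} (hij : i ≠ j) :
    Disjoint (pathCorners (C i)) (pathCorners (C j)) :=
  Finset.disjoint_of_subset_left pathCorners_subset
    (Finset.disjoint_of_subset_right pathCorners_subset (hF.2 i j hij))

lemma cornersOf_card : (cornersOf C).card = ∑ i, (pathCorners (C i)).card := by
  classical
  exact Finset.card_biUnion (fun i _ j _ hij => corner_disjoint hF hij)

lemma corner_card_le (i : Fin r) : (pathCorners (C i)).card ≤ m - r := by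
  classical
  have hrm := r_le_m hF i
  have hPi : IsPathE m n (C i) ((i : ℤ) + 1) ((i : ℤ) + 1) := hF.1 i
  have hinj : Set.InjOn Prod.fst ((pathCorners (C i)) : Set (ℤ × ℤ)) := by
    rintro ⟨px, py⟩ hp ⟨qx, qy⟩ hq hpq
    simp only [Set.mem_setOf_eq, Finset.coe_sort_coe, Finset.mem_coe] at hp hq
    simp only at hpq
    subst hpq
    have := cornerRowUnique hPi hp hq
    simp [this]
  have hsub : (pathCorners (C i)).image Prod.fst ⊆
      Finset.Icc ((i : ℤ) + 2) ((m : ℤ) - r + ((i : ℤ) + 1)) := by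
    intro x hx
    simp only [Finset.mem_image] at hx
    obtain ⟨⟨px, py⟩, hp, rfl⟩ := hx
    have hb := cornerBounds hPi hp
    have hs := sing hF (pathCorners_subset hp) (by omega)
    simp only [Finset.mem_Icc]
    constructor <;> omega
  have h1 : (pathCorners (C i)).card = ((pathCorners (C i)).image Prod.fst).card :=
    (Finset.card_image_of_injOn hinj).symm
  have h2 := Finset.card_le_card hsub
  rw [Int.card_Icc] at h2
  omega

lemma flip_of_hook (hrm : r + 1 ≤ m) (hmn : m ≤ n)
    (hex : ∃ i, pathCorners (C i) = ∅) :
    ¬ NonFlippable m n r (fun i => (i : ℤ) + 1) (fun i => (i : ℤ) + 1) C := by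
  classical
  intro hNF
  obtain ⟨i0, hi0⟩ := hex
  have hSne : (Finset.univ.filter (fun i : Fin r => pathCorners (C i) = ∅)).Nonempty :=
    ⟨i0, by simp [hi0]⟩
  obtain ⟨i, hiS, hmax⟩ := Finset.exists_max_image _ id hSne
  simp only [Finset.mem_filter, Finset.mem_univ, true_and] at hiS
  have Wi : PW m n (C i) ((i : ℤ) + 1) ((i : ℤ) + 1) := pwOf (hF.1 i)
  have hPi : IsPathE m n (C i) ((i : ℤ) + 1) ((i : ℤ) + 1) := hF.1 i
  have hilt : (i : ℕ) < r := i.isLt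
  have hIm : (i : ℤ) + 1 + 1 ≤ (m : ℤ) := by omega
  have hIn : (i : ℤ) + 1 + 1 ≤ (n : ℤ) := by omega
  -- the hook structure of C i
  have hook : ∀ x y : ℤ, (x, y) ∈ C i → (i : ℤ) + 2 ≤ x → y = (i : ℤ) + 1 := by
    intro x y hm hx
    exact hookOfNoCorners hPi hiS hm (by omega)
  have hCiRow : ∀ x : ℤ, (i : ℤ) + 2 ≤ x → x ≤ (m : ℤ) → (x, (i : ℤ) + 1) ∈ C i := by
    intro x h1 h2
    obtain ⟨y, hy⟩ := Wi.rowExists (x := x) (by omega) h2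
    have := hook x y hy h1
    rwa [this] at hy
  have hCiCorner : ((i : ℤ) + 1, (i : ℤ) + 1) ∈ C i := by
    have h1 : ((i : ℤ) + 2, (i : ℤ) + 1) ∈ C i := hCiRow _ (le_refl _) hIm
    obtain ⟨y1, hy1, hm1, hm2⟩ := Wi.exit (by omega) _ h1
    have := hook _ _ hm1 (le_refl _)
    rw [this] at hm2
    have he : (i : ℤ) + 2 - 1 = (i : ℤ) + 1 := by ring
    rwa [he] at hm2
  have hCiTop : ∀ y : ℤ, (i : ℤ) + 1 ≤ y → y ≤ (n : ℤ) → ((i : ℤ) + 1, y) ∈ C i := by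
    intro y h1 h2
    exact Wi.rowConvex hCiCorner Wi.last h1 h2
  -- the free column
  obtain ⟨R, hR1, hR2, hRfree⟩ : ∃ R : ℤ, (i : ℤ) + 3 ≤ R ∧ R ≤ (m : ℤ) + 1 ∧
      ∀ x : ℤ, x ≤ R - 1 → ∀ j : Fin r, (i : ℕ) < (j : ℕ) →
        (x, (i : ℤ) + 2) ∉ C j := by
    by_cases hlast : (i : ℕ) + 1 = r
    · refine ⟨(m : ℤ) + 1, by omega, by omega, ?_⟩
      intro x hx j hj
      have := j.isLt
      omega
    · have hr' : (i : ℕ) + 1 < r := by omega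
      obtain ⟨i', hi'⟩ : ∃ i' : Fin r, (i' : ℕ) = (i : ℕ) + 1 := ⟨⟨(i : ℕ) + 1, hr'⟩, rfl⟩
      have hci' : ((i' : ℕ) : ℤ) = (i : ℤ) + 1 := by omega
      have Wi' : PW m n (C i') ((i' : ℤ) + 1) ((i' : ℤ) + 1) := pwOf (hF.1 i')
      have hPi' : IsPathE m n (C i') ((i' : ℤ) + 1) ((i' : ℤ) + 1) := hF.1 i'
      have hne' : pathCorners (C i') ≠ ∅ := by
        intro hcc
        have hmem : i' ∈ Finset.univ.filter (fun j : Fin r => pathCorners (C j) = ∅) := by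
          simp [hcc]
        have := hmax i' hmem
        simp only [id] at this
        have : (i' : ℕ) ≤ (i : ℕ) := this
        omega
      obtain ⟨⟨xc, yc⟩, hc⟩ := Finset.nonempty_iff_ne_empty.mpr hne'
      have hcb := cornerBounds hPi' hc
      have hT : ((C i').filter (fun v => (i : ℤ) + 3 ≤ v.2)).Nonempty := by
        refine ⟨(xc, yc), ?_⟩
        simp only [Finset.mem_filter]
        exact ⟨pathCorners_subset hc, by omega⟩
      obtain ⟨⟨xR, yR⟩, hRmem, hRmax⟩ := Finset.exists_max_image _ Prod.fst hT
      simp only [Finset.mem_filter] at hRmem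
      have hRb := Wi'.bounds hRmem.1
      refine ⟨xR, ?_, by omega, ?_⟩
      · have hcb2 := cornerBounds hPi' hc
        have hxc : xc ≤ xR := by
          have : ((xc : ℤ), yc) ∈ (C i').filter (fun v => (i : ℤ) + 3 ≤ v.2) := by
            simp only [Finset.mem_filter]
            exact ⟨pathCorners_subset hc, by omega⟩
          exact hRmax _ this
        omega
      · intro x hx j hj
        intro hmem
        have hjb := (pwOf (hF.1 j) : PW m n (C j) ((j : ℤ) + 1) ((j : ℤ) + 1)).bounds hmem
        by_cases hji : (j : ℕ) = (i : ℕ) + 1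
        · have hjeq : j = i' := by
            apply Fin.ext
            omega
          subst hjeq
          have := Wi'.n4g hmem hRmem.1 (by omega)
          omega
        · have : (i : ℕ) + 2 ≤ (j : ℕ) := by omega
          omega
  -- cells of C i in row i+1 and the full free-cell lemma
  have hfree : ∀ x : ℤ, (i : ℤ) + 2 ≤ x → x ≤ R - 1 → ∀ j : Fin r, j ≠ i →
      (x, (i : ℤ) + 2) ∉ C j := by
    intro x hx1 hx2 j hj hmem
    rcases lt_trichotomy ((j : ℕ)) ((i : ℕ)) with hlt | heq | hgt
    · have hrow : (x, (i : ℤ) + 1) ∈ C i := hCiRow x hx1 (by omega)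
      have := nest hF hlt (x := x) (by omega) hmem hrow
      omega
    · exact hj (Fin.ext heq)
    · exact hRfree x hx2 j hgt hmem
  -- build the new path
  set wn : ℤ → ℤ := fun x =>
    if x ≤ (i : ℤ) + 1 then (n : ℤ) else if x ≤ R - 1 then (i : ℤ) + 2 else (i : ℤ) + 1
    with hwn
  have hWOK : WOK ((i : ℤ) + 1) ((i : ℤ) + 1) (m : ℤ) (n : ℤ) wn := by
    constructor
    · omega
    · omega
    · simp [hwn]
    · simp only [hwn]
      split_ifs <;> omega
    · intro x h1 h2
      simp only [hwn]
      split_ifs <;> omega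
  have hNP := buildPath m n ((i : ℤ) + 1) ((i : ℤ) + 1) wn hWOK
  set NP := cellsW ((i : ℤ) + 1) ((i : ℤ) + 1) (m : ℤ) (n : ℤ) wn with hNPdef
  -- description of membership in NP
  have hNPmem : ∀ x y : ℤ, ((x, y) ∈ NP ↔
      ((i : ℤ) + 1 ≤ x ∧ x ≤ (m : ℤ) ∧
        (if x = (m : ℤ) then (i : ℤ) + 1 else wn (x + 1)) ≤ y ∧ y ≤ wn x)) := by
    intro x y
    exact hWOK.memW
  have hNPcases : ∀ x y : ℤ, (x, y) ∈ NP →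
      ((x, y) ∈ C i ∨ ((i : ℤ) + 2 ≤ x ∧ x ≤ R - 1 ∧ y = (i : ℤ) + 2)) := by
    intro x y hmem
    rw [hNPmem] at hmem
    obtain ⟨h1, h2, h3, h4⟩ := hmem
    rcases eq_or_lt_of_le h1 with hxi | hxi
    · left
      subst hxi
      apply hCiTop
      · split_ifs at h3 with hh
        · omega
        · simp only [hwn] at h3
          split_ifs at h3 <;> omega
      · simp only [hwn] at h4
        split_ifs at h4 <;> omega
    · -- x ≥ i+2
      simp only [hwn] at h3 h4
      by_cases hxR : x ≤ R - 1
      · rcases eq_or_lt_of_le h4 with hy4 | hy4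
        · right
          rw [if_neg (by omega), if_pos hxR] at hy4
          exact ⟨by omega, hxR, hy4⟩
        · left
          have hy : y = (i : ℤ) + 1 := by
            split_ifs at h3 h4 hy4 <;> omega
          rw [hy]
          exact hCiRow x (by omega) h2
      · left
        have hy : y = (i : ℤ) + 1 := by
          split_ifs at h3 h4 <;> omega
        rw [hy]
        exact hCiRow x (by omega) h2
  -- the new facet
  set C'' : Fin r → Finset (ℤ × ℤ) := Function.update C i NP with hC''
  have hFD : IsFacetDecomp m n r (fun i => (i : ℤ) + 1) (fun i => (i : ℤ) + 1) C'' := by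
    constructor
    · intro j
      by_cases hji : j = i
      · subst hji
        simp only [hC'', Function.update_self]
        exact hNP
      · simp only [hC'', Function.update_of_ne hji]
        exact hF.1 j
    · intro j k hjk
      have key : ∀ k : Fin r, k ≠ i → Disjoint NP (C k) := by
        intro k hk
        rw [Finset.disjoint_left]
        rintro ⟨x, y⟩ hmem hmem'
        rcases hNPcases x y hmem with hcase | hcase
        · exact Finset.disjoint_left.mp (hF.2 i k (by exact fun h => hk h.symm)) hcase hmem'
        · exact hfree x hcase.1 hcase.2.1 k hk (hcase.2.2 ▸ hmem')
      by_cases hji : j = i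
      · subst hji
        simp only [hC'', Function.update_self, Function.update_of_ne (Ne.symm hjk)]
        exact key k (Ne.symm hjk)
      · by_cases hki : k = i
        · subst hki
          simp only [hC'', Function.update_self, Function.update_of_ne hji]
          exact (key j hji).symm
        · simp only [hC'', Function.update_of_ne hji, Function.update_of_ne hki]
          exact hF.2 j k hjk
  have hsub : cornersOf C ⊆ cornersOf C'' := by
    intro v hv
    simp only [cornersOf, Finset.mem_biUnion, Finset.mem_univ, true_and] at hv ⊢
    obtain ⟨j, hj⟩ := hv
    by_cases hji : j = i
    · subst hji
      rw [hiS] at hj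
      simp at hj
    · exact ⟨j, by rwa [hC'', Function.update_of_ne hji]⟩
  have hun := hNF C'' hFD hsub
  -- contradiction via the cell (R - 1, i + 2)
  have hvNP : ((R : ℤ) - 1, (i : ℤ) + 2) ∈ NP := by
    rw [hNPmem]
    refine ⟨by omega, by omega, ?_, ?_⟩
    · split_ifs with hh
      · omega
      · simp only [hwn]
        rw [if_neg (by omega), if_neg (by omega)]
        omega
    · simp only [hwn]
      rw [if_neg (by omega), if_pos (by omega)]
  have hvC'' : ((R : ℤ) - 1, (i : ℤ) + 2) ∈ Finset.univ.biUnion C'' := by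
    simp only [Finset.mem_biUnion, Finset.mem_univ, true_and]
    exact ⟨i, by rw [hC'', Function.update_self]; exact hvNP⟩
  rw [hun] at hvC''
  simp only [Finset.mem_biUnion, Finset.mem_univ, true_and] at hvC''
  obtain ⟨j, hj⟩ := hvC''
  by_cases hji : j = i
  · subst hji
    have := hook _ _ hj (by omega)
    omega
  · exact hfree (R - 1) (by omega) (by omega) j hji hj

end Flip
end NFP

namespace NFP

section Construction

variable (m n r : ℕ) (s : ℤ → ℤ)

def wS (i : ℤ) : ℤ → ℤ := fun x =>
  if x ≤ i then (n : ℤ)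
  else if x ≤ (m : ℤ) - r + i + 1 - s i then (n : ℤ) - r + i
  else if x ≤ (m : ℤ) - r + i then (n : ℤ) - r + i + ((m : ℤ) - r + i + 1 - s i) - x
  else i

lemma wS_cases (i x : ℤ) :
    (x ≤ i ∧ wS m n r s i x = n) ∨
    (i + 1 ≤ x ∧ x ≤ (m : ℤ) - r + i + 1 - s i ∧ wS m n r s i x = (n : ℤ) - r + i) ∨
    ((m : ℤ) - r + i + 2 - s i ≤ x ∧ x ≤ (m : ℤ) - r + i ∧
      wS m n r s i x = (n : ℤ) - r + i + ((m : ℤ) - r + i + 1 - s i) - x) ∨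
    ((m : ℤ) - r + i + 1 ≤ x ∧ wS m n r s i x = i) := by
  unfold wS
  split_ifs <;> omega

variable {m n r s}

variable {i : ℤ} (hi1 : 1 ≤ i) (hi2 : i ≤ r) (hrm : r + 1 ≤ m) (hmn : m ≤ n)
  (hs1 : 1 ≤ s i) (hs2 : s i ≤ (m : ℤ) - r)

include hi1 hi2 hrm hmn hs1 hs2

lemma wS_WOK : WOK i i (m : ℤ) (n : ℤ) (wS m n r s i) := by
  constructor
  · omega
  · omega
  · have := wS_cases m n r s i i
    omega
  · have := wS_cases m n r s i (m : ℤ)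
    omega
  · intro x h1 h2
    have := wS_cases m n r s i x
    have := wS_cases m n r s i (x + 1)
    omega

lemma lS_eq (x : ℤ) :
    (if x = (m : ℤ) then i else wS m n r s i (x + 1)) = wS m n r s i (x + 1) := by
  split_ifs with h
  · subst h
    have := wS_cases m n r s i ((m : ℤ) + 1)
    omega
  · rfl

end Construction

section Construction2

variable {m n r : ℕ} {s : ℤ → ℤ}

noncomputable def PP (m n r : ℕ) (s : ℤ → ℤ) (i : ℤ) : Finset (ℤ × ℤ) :=
  cellsW i i (m : ℤ) (n : ℤ) (wS m n r s i)

variable {i : ℤ} (hi1 : 1 ≤ i) (hi2 : i ≤ r) (hrm : r + 1 ≤ m) (hmn : m ≤ n)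
  (hs1 : 1 ≤ s i) (hs2 : s i ≤ (m : ℤ) - r)

include hi1 hi2 hrm hmn hs1 hs2

lemma mem_PP {x y : ℤ} : (x, y) ∈ PP m n r s i ↔
    i ≤ x ∧ x ≤ (m : ℤ) ∧ wS m n r s i (x + 1) ≤ y ∧ y ≤ wS m n r s i x := by
  rw [PP, (wS_WOK hi1 hi2 hrm hmn hs1 hs2).memW, lS_eq hi1 hi2 hrm hmn hs1 hs2]

lemma PP_isPath : IsPathE m n (PP m n r s i) i i :=
  buildPath m n i i _ (wS_WOK hi1 hi2 hrm hmn hs1 hs2)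

lemma PP_corners {x y : ℤ} : (x, y) ∈ pathCorners (PP m n r s i) ↔
    ((m : ℤ) - r + i + 1 - s i ≤ x ∧ x ≤ (m : ℤ) - r + i ∧
      y = (n : ℤ) - r + i + ((m : ℤ) - r + i + 1 - s i) - x) := by
  rw [mem_pathCorners, mem_PP hi1 hi2 hrm hmn hs1 hs2, mem_PP hi1 hi2 hrm hmn hs1 hs2,
    mem_PP hi1 hi2 hrm hmn hs1 hs2]
  have c0 := wS_cases m n r s i (x - 1)
  have c1 := wS_cases m n r s i x
  have c2 := wS_cases m n r s i (x + 1)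
  have c3 : x - 1 + 1 = x := by ring
  rw [c3]
  omega

end Construction2
end NFP

namespace NFP
section Construction3

variable {m n r : ℕ} {s : ℤ → ℤ}

lemma PP_corners_card {i : ℤ} (hi1 : 1 ≤ i) (hi2 : i ≤ r) (hrm : r + 1 ≤ m) (hmn : m ≤ n)
    (hs1 : 1 ≤ s i) (hs2 : s i ≤ (m : ℤ) - r) :
    (pathCorners (PP m n r s i)).card = (s i).toNat := by
  classical
  have heq : pathCorners (PP m n r s i) =
      (Finset.Icc ((m : ℤ) - r + i + 1 - s i) ((m : ℤ) - r + i)).image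
        (fun x => (x, (n : ℤ) - r + i + ((m : ℤ) - r + i + 1 - s i) - x)) := by
    ext ⟨x, y⟩
    rw [PP_corners hi1 hi2 hrm hmn hs1 hs2]
    simp only [Finset.mem_image, Finset.mem_Icc, Prod.mk.injEq]
    constructor
    · rintro ⟨h1, h2, h3⟩
      exact ⟨x, ⟨h1, h2⟩, rfl, h3.symm⟩
    · rintro ⟨z, ⟨h1, h2⟩, rfl, rfl⟩
      exact ⟨h1, h2, rfl⟩
  rw [heq, Finset.card_image_of_injOn, Int.card_Icc]
  · omega
  · intro u _ v _ huv
    simpa using (Prod.ext_iff.mp huv).1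

lemma PP_disjoint {i j : ℤ} (hi1 : 1 ≤ i) (hij : i < j) (hj2 : j ≤ r)
    (hrm : r + 1 ≤ m) (hmn : m ≤ n)
    (hsi1 : 1 ≤ s i) (hsi2 : s i ≤ (m : ℤ) - r)
    (hsj1 : 1 ≤ s j) (hsj2 : s j ≤ (m : ℤ) - r) (hsd : s j ≤ s i) :
    Disjoint (PP m n r s i) (PP m n r s j) := by
  rw [Finset.disjoint_left]
  rintro ⟨x, y⟩ hmi hmj
  rw [mem_PP hi1 (by omega) hrm hmn hsi1 hsi2] at hmi
  rw [mem_PP (by omega) hj2 hrm hmn hsj1 hsj2] at hmj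
  have c1 := wS_cases m n r s i x
  have c2 := wS_cases m n r s i (x + 1)
  have c3 := wS_cases m n r s j x
  have c4 := wS_cases m n r s j (x + 1)
  omega

lemma exists_s (m r : ℕ) (q : ℕ) (t : ℤ) (hq : 1 ≤ q) (ht1 : (r : ℤ) ≤ t)
    (ht2 : t ≤ (r : ℤ) * q) :
    ∃ s : ℤ → ℤ, (∀ k : ℤ, 1 ≤ k → k ≤ r → 1 ≤ s k ∧ s k ≤ (q : ℤ)) ∧
      (∀ k l : ℤ, 1 ≤ k → k ≤ l → l ≤ r → s l ≤ s k) ∧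
      (∑ k ∈ Finset.Icc (1 : ℤ) r, s k) = t := by
  classical
  suffices H : ∀ d : ℕ, ∀ t : ℤ, (r : ℤ) ≤ t → t ≤ (r : ℤ) * q → (t - r).toNat = d →
      ∃ s : ℤ → ℤ, (∀ k : ℤ, 1 ≤ k → k ≤ r → 1 ≤ s k ∧ s k ≤ (q : ℤ)) ∧
      (∀ k l : ℤ, 1 ≤ k → k ≤ l → l ≤ r → s l ≤ s k) ∧
      (∑ k ∈ Finset.Icc (1 : ℤ) r, s k) = t by
    exact H _ t ht1 ht2 rfl
  intro d
  induction d with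
  | zero =>
    intro t h1 h2 hd
    have ht : t = r := by omega
    refine ⟨fun _ => 1, fun k hk1 hk2 => ⟨le_refl _, by show (1:ℤ) ≤ (q:ℤ); exact_mod_cast hq⟩,
      fun _ _ _ _ _ => le_refl _, ?_⟩
    rw [Finset.sum_const, Int.card_Icc, nsmul_eq_mul, mul_one]
    omega
  | succ d ih =>
    intro t h1 h2 hd
    obtain ⟨s, hsb, hsd, hsum⟩ := ih (t - 1) (by omega) (by omega) (by omega)
    have hrpos : 0 < r := by
      by_contra hr0
      have : (r : ℤ) = 0 := by omega
      rw [this] at h2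
      omega
    -- find the minimal index where s < q
    have hne : ((Finset.Icc (1 : ℤ) r).filter (fun k => s k < q)).Nonempty := by
      by_contra hcon
      rw [Finset.not_nonempty_iff_eq_empty] at hcon
      have hall : ∀ k ∈ Finset.Icc (1 : ℤ) (r : ℤ), s k = q := by
        intro k hk
        simp only [Finset.mem_Icc] at hk
        have h6 := hsb k hk.1 hk.2
        rcases eq_or_lt_of_le h6.2 with h | h
        · exact h
        · exfalso
          have hmem : k ∈ (Finset.Icc (1 : ℤ) r).filter (fun k => s k < q) := by
            simp only [Finset.mem_filter, Finset.mem_Icc]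
            exact ⟨⟨hk.1, hk.2⟩, h⟩
          rw [hcon] at hmem
          simp at hmem
      rw [Finset.sum_congr rfl hall, Finset.sum_const, Int.card_Icc] at hsum
      have hcard : ((r : ℤ) + 1 - 1).toNat = r := by omega
      rw [hcard, nsmul_eq_mul] at hsum
      omega
    obtain ⟨k0, hk0, hk0min⟩ := Finset.exists_min_image _ id hne
    simp only [Finset.mem_filter, Finset.mem_Icc] at hk0
    refine ⟨Function.update s k0 (s k0 + 1), ?_, ?_, ?_⟩
    · intro k h1' h2'
      by_cases hk : k = k0
      · subst hk
        rw [Function.update_self]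
        have := hsb k h1' h2'
        omega
      · rw [Function.update_of_ne hk]
        exact hsb k h1' h2'
    · intro k l hk1 hkl hlr
      have hbk := hsb k hk1 (by omega)
      have hbl := hsb l (by omega) hlr
      by_cases hkk : k = k0
      · subst hkk
        rw [Function.update_self]
        by_cases hll : l = k
        · subst hll
          rw [Function.update_self]
        · rw [Function.update_of_ne hll]
          have := hsd k l hk1 hkl hlr
          omega
      · rw [Function.update_of_ne hkk]
        by_cases hll : l = k0
        · subst hll
          rw [Function.update_self]
          -- k < l = k0, k not in filter by minimality, so s k = q
          have hkmem : k ∉ (Finset.Icc (1 : ℤ) r).filter (fun k => s k < q) := by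
            intro hmem
            have := hk0min k hmem
            simp only [id] at this
            omega
          simp only [Finset.mem_filter, Finset.mem_Icc, not_and, not_lt] at hkmem
          have h5 := hkmem ⟨hk1, by omega⟩
          omega
        · rw [Function.update_of_ne hll]
          exact hsd k l hk1 hkl hlr
    · rw [Finset.sum_update_of_mem (by simp only [Finset.mem_Icc]; omega),
        Finset.sdiff_singleton_eq_erase]
      rw [← Finset.sum_erase_add _ _ (show k0 ∈ Finset.Icc (1:ℤ) (r:ℤ) by
        simp only [Finset.mem_Icc]; omega)] at hsum
      omega

end Construction3
end NFP

namespace NFP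
section Rigidity

variable {m n r : ℕ} {s : ℤ → ℤ}

noncomputable def CCdef (m n r : ℕ) (s : ℤ → ℤ) : Fin r → Finset (ℤ × ℤ) :=
  fun i => PP m n r s ((i : ℤ) + 1)

lemma CCdef_apply (i : Fin r) : CCdef m n r s i = PP m n r s ((i : ℤ) + 1) := rfl

lemma exists_fin (k : ℤ) (h1 : 1 ≤ k) (h2 : k ≤ r) : ∃ j : Fin r, (j : ℤ) + 1 = k := by
  refine ⟨⟨(k - 1).toNat, by omega⟩, ?_⟩
  simp only [Fin.val_mk]
  omega

variable (hr : 1 ≤ r) (hrm : r + 1 ≤ m) (hmn : m ≤ n)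
  (hsb : ∀ k : ℤ, 1 ≤ k → k ≤ r → 1 ≤ s k ∧ s k ≤ (m : ℤ) - r)
  (hsd : ∀ k l : ℤ, 1 ≤ k → k ≤ l → l ≤ r → s l ≤ s k)

include hrm hmn hsb hsd

lemma CC_facet : IsFacetDecomp m n r (fun i => (i : ℤ) + 1) (fun i => (i : ℤ) + 1)
    (CCdef m n r s) := by
  constructor
  · intro i
    have h1 : (1 : ℤ) ≤ (i : ℤ) + 1 := by omega
    have h2 : ((i : ℤ) + 1) ≤ r := by have := i.isLt; omega
    obtain ⟨hs1, hs2⟩ := hsb _ h1 h2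
    exact PP_isPath h1 h2 hrm hmn hs1 hs2
  · intro i j hij
    have hi2 : ((i : ℤ) + 1) ≤ r := by have := i.isLt; omega
    have hj2 : ((j : ℤ) + 1) ≤ r := by have := j.isLt; omega
    obtain ⟨hsi1, hsi2⟩ := hsb ((i : ℤ) + 1) (by omega) hi2
    obtain ⟨hsj1, hsj2⟩ := hsb ((j : ℤ) + 1) (by omega) hj2
    rcases lt_trichotomy ((i : ℕ)) ((j : ℕ)) with hlt | heq | hgt
    · exact PP_disjoint (by omega) (by omega) hj2 hrm hmn hsi1 hsi2 hsj1 hsj2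
        (hsd _ _ (by omega) (by omega) hj2)
    · exact absurd (Fin.ext heq) hij
    · exact (PP_disjoint (by omega) (by omega) hi2 hrm hmn hsj1 hsj2 hsi1 hsi2
        (hsd _ _ (by omega) (by omega) hi2)).symm

lemma key (C' : Fin r → Finset (ℤ × ℤ))
    (hF' : IsFacetDecomp m n r (fun i => (i : ℤ) + 1) (fun i => (i : ℤ) + 1) C')
    (hsub : cornersOf (CCdef m n r s) ⊆ cornersOf C') (i : Fin r)
    (IH : ∀ j : Fin r, (i : ℕ) < (j : ℕ) → C' j = CCdef m n r s j) :
    C' i = CCdef m n r s i := by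
  classical
  have hI1 : (1 : ℤ) ≤ (i : ℤ) + 1 := by omega
  have hI2 : ((i : ℤ) + 1) ≤ r := by have := i.isLt; omega
  obtain ⟨hsI1, hsI2⟩ := hsb ((i : ℤ) + 1) hI1 hI2
  have hPi' : IsPathE m n (C' i) ((i : ℤ) + 1) ((i : ℤ) + 1) := hF'.1 i
  have W' : PW m n (C' i) ((i : ℤ) + 1) ((i : ℤ) + 1) := pwOf hPi'
  -- Step 1+2 : the corners of the model path are corners of C' i
  have chain : ∀ x y : ℤ, (m : ℤ) - r + ((i : ℤ) + 1) + 1 - s ((i : ℤ) + 1) ≤ x →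
      x ≤ (m : ℤ) - r + ((i : ℤ) + 1) →
      y = (n : ℤ) - r + ((i : ℤ) + 1) +
        ((m : ℤ) - r + ((i : ℤ) + 1) + 1 - s ((i : ℤ) + 1)) - x →
      (x, y) ∈ pathCorners (C' i) := by
    suffices H : ∀ d : ℕ, ∀ x y : ℤ, ((m : ℤ) - r + ((i : ℤ) + 1) - x).toNat = d →
        (m : ℤ) - r + ((i : ℤ) + 1) + 1 - s ((i : ℤ) + 1) ≤ x →
        x ≤ (m : ℤ) - r + ((i : ℤ) + 1) →
        y = (n : ℤ) - r + ((i : ℤ) + 1) +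
          ((m : ℤ) - r + ((i : ℤ) + 1) + 1 - s ((i : ℤ) + 1)) - x →
        (x, y) ∈ pathCorners (C' i) by
      exact fun x y h1 h2 h3 => H _ x y rfl h1 h2 h3
    intro d
    induction d using Nat.strong_induction_on with
    | _ d ihd =>
      intro x y hd h1 h2 h3
      -- (x, y) is a corner of the model path, hence of some C' j
      have hK : (x, y) ∈ pathCorners (PP m n r s ((i : ℤ) + 1)) := by
        rw [PP_corners hI1 hI2 hrm hmn hsI1 hsI2]
        omega
      have hK2 : (x, y) ∈ cornersOf C' := by
        apply hsub
        simp only [cornersOf, Finset.mem_biUnion]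
        exact ⟨i, Finset.mem_univ i, by rw [CCdef_apply]; exact hK⟩
      simp only [cornersOf, Finset.mem_biUnion, Finset.mem_univ, true_and] at hK2
      obtain ⟨j, hj⟩ := hK2
      rcases eq_or_lt_of_le h2 with hxB | hxB
      · -- base : x is the bottom row of the chain
        rcases lt_trichotomy ((j : ℕ)) ((i : ℕ)) with hlt | heq | hgt
        · exfalso
          have hcell : (x, y) ∈ C' j := pathCorners_subset hj
          have hs' := sing hF' hcell (by omega)
          omega
        · rwa [← Fin.ext heq]
        · exfalso
          rw [IH j hgt, CCdef_apply] at hj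
          have hj2 : ((j : ℤ) + 1) ≤ r := by have := j.isLt; omega
          obtain ⟨hsj1, hsj2⟩ := hsb ((j : ℤ) + 1) (by omega) hj2
          have hsdij := hsd ((i : ℤ) + 1) ((j : ℤ) + 1) hI1 (by omega) hj2
          rw [PP_corners (by omega) hj2 hrm hmn hsj1 hsj2] at hj
          omega
      · -- step : use the corner just below-right
        have hprev := ihd (((m : ℤ) - r + ((i : ℤ) + 1) - (x + 1)).toNat) (by omega)
          (x + 1) (y - 1) rfl (by omega) (by omega) (by omega)
        have hcell1 : (x, y - 1) ∈ C' i := by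
          have := (mem_pathCorners.mp hprev).2.1
          have he : x + 1 - 1 = x := by ring
          rwa [he] at this
        have hcell2 : (x, y - 1) ∈ C' j := (mem_pathCorners.mp hj).2.2
        by_cases hji : j = i
        · rwa [← hji]
        · exfalso
          exact Finset.disjoint_left.mp (hF'.2 i j (Ne.symm hji)) hcell1 hcell2
  -- Step 3 : corners of C' i are corners of the model path
  have rev : ∀ v ∈ pathCorners (C' i), v ∈ pathCorners (PP m n r s ((i : ℤ) + 1)) := by
    rintro ⟨x', y'⟩ hv
    have hcb := cornerBounds hPi' hv
    have hsing := sing hF' (pathCorners_subset hv) (by omega)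
    by_cases hxX : (m : ℤ) - r + ((i : ℤ) + 1) + 1 - s ((i : ℤ) + 1) ≤ x'
    · have hch := chain x' ((n : ℤ) - r + ((i : ℤ) + 1) +
        ((m : ℤ) - r + ((i : ℤ) + 1) + 1 - s ((i : ℤ) + 1)) - x') hxX hsing rfl
      have heq := cornerRowUnique hPi' hv hch
      rw [PP_corners hI1 hI2 hrm hmn hsI1 hsI2]
      exact ⟨hxX, hsing, heq⟩
    · exfalso
      push_neg at hxX
      have htop := chain ((m : ℤ) - r + ((i : ℤ) + 1) + 1 - s ((i : ℤ) + 1))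
        ((n : ℤ) - r + ((i : ℤ) + 1)) (le_refl _) (by omega) (by ring)
      have hgt := cornerAntichain hPi' htop hv (by omega)
      -- y' > n - r + (i+1)
      have hJ'2 : y' - (n : ℤ) + r ≤ r := by omega
      rcases le_or_gt (y' - (n : ℤ) + r) x' with hc1 | hc1
      · -- the cell (x', y') lies on the vertical segment of path y' - n + r
        obtain ⟨j', hj'⟩ := exists_fin (r := r) (y' - (n : ℤ) + r) (by omega) hJ'2
        obtain ⟨hsj1, hsj2⟩ := hsb (y' - (n : ℤ) + r) (by omega) hJ'2
        have hsdij := hsd ((i : ℤ) + 1) (y' - (n : ℤ) + r) hI1 (by omega) hJ'2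
        have hmem : (x', y') ∈ PP m n r s (y' - (n : ℤ) + r) := by
          rw [mem_PP (by omega) hJ'2 hrm hmn hsj1 hsj2]
          have c1 := wS_cases m n r s (y' - (n : ℤ) + r) x'
          have c2 := wS_cases m n r s (y' - (n : ℤ) + r) (x' + 1)
          refine ⟨by omega, by omega, by omega, by omega⟩
        have hne : i ≠ j' := by
          intro he
          rw [← he] at hj'
          omega
        have hdis := hF'.2 i j' hne
        rw [IH j' (by omega), CCdef_apply, hj'] at hdis
        exact Finset.disjoint_left.mp hdis (pathCorners_subset hv) hmem
      · -- the cell (x', y') lies on the top row of path x'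
        obtain ⟨j'', hj''⟩ := exists_fin (r := r) x' (by omega) (by omega)
        obtain ⟨hsj1, hsj2⟩ := hsb x' (by omega) (by omega)
        have hmem : (x', y') ∈ PP m n r s x' := by
          rw [mem_PP (by omega) (by omega) hrm hmn hsj1 hsj2]
          have c1 := wS_cases m n r s x' x'
          have c2 := wS_cases m n r s x' (x' + 1)
          refine ⟨by omega, by omega, by omega, by omega⟩
        have hne : i ≠ j'' := by
          intro he
          rw [← he] at hj''
          omega
        have hdis := hF'.2 i j'' hne
        rw [IH j'' (by omega), CCdef_apply, hj''] at hdis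
        exact Finset.disjoint_left.mp hdis (pathCorners_subset hv) hmem
  -- Step 4 : C' i ⊆ model path
  have hsubP : C' i ⊆ PP m n r s ((i : ℤ) + 1) := by
    rintro ⟨x, y⟩ hm
    have hb := W'.bounds hm
    rw [mem_PP hI1 hI2 hrm hmn hsI1 hsI2]
    refine ⟨hb.1, hb.2.1, ?_, ?_⟩
    · have c2 := wS_cases m n r s ((i : ℤ) + 1) (x + 1)
      rcases c2 with h | h | h | h
      · omega
      · have htop := chain ((m : ℤ) - r + ((i : ℤ) + 1) + 1 - s ((i : ℤ) + 1))
          ((n : ℤ) - r + ((i : ℤ) + 1)) (le_refl _) (by omega) (by ring)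
        have := cornerBelow hPi' htop hm (by omega)
        omega
      · have hcx := chain (x + 1) ((n : ℤ) - r + ((i : ℤ) + 1) +
          ((m : ℤ) - r + ((i : ℤ) + 1) + 1 - s ((i : ℤ) + 1)) - (x + 1))
          (by omega) (by omega) rfl
        have := cornerBelow hPi' hcx hm (by omega)
        omega
      · omega
    · have c1 := wS_cases m n r s ((i : ℤ) + 1) x
      rcases le_or_gt y ((i : ℤ) + 1) with hyI | hyI
      · omega
      · rcases eq_or_lt_of_le hb.1 with hxI | hxI
        · omega
        · obtain ⟨xc, yc, hcc, hxc, hyc⟩ := cornerAbove hPi' hm (by omega) (by omega)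
          have hccK := rev _ hcc
          rw [PP_corners hI1 hI2 hrm hmn hsI1 hsI2] at hccK
          omega
  -- conclude by cardinality
  have hc1 := W'.card_eq
  have hc2 := (pwOf (PP_isPath hI1 hI2 hrm hmn hsI1 hsI2) :
    PW m n (PP m n r s ((i : ℤ) + 1)) ((i : ℤ) + 1) ((i : ℤ) + 1)).card_eq
  rw [CCdef_apply]
  exact Finset.eq_of_subset_of_card_le hsubP (by omega)

lemma CC_nonflip : NonFlippable m n r (fun i => (i : ℤ) + 1) (fun i => (i : ℤ) + 1)
    (CCdef m n r s) := by
  intro C' hF' hsub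
  have hall : ∀ i : Fin r, C' i = CCdef m n r s i := by
    have H : ∀ d : ℕ, ∀ i : Fin r, r ≤ (i : ℕ) + d + 1 → C' i = CCdef m n r s i := by
      intro d
      induction d with
      | zero =>
        intro i hi
        apply key hrm hmn hsb hsd C' hF' hsub i
        intro j hj
        exfalso
        have := j.isLt
        omega
      | succ d ih =>
        intro i hi
        apply key hrm hmn hsb hsd C' hF' hsub i
        intro j hj
        exact ih j (by omega)
    intro i
    exact H r i (by omega)
  exact Finset.biUnion_congr rfl (fun i _ => hall i)

end Rigidity
end NFP


/-- For `1 ≤ r ≤ m-1 ≤ n-1`, there exists a non-flippable facet of `Δ_r` (the complex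
of the initial ideal of the `(r+1)`-minors of a generic `m × n` matrix, i.e.
`σ = [1,…,r | 1,…,r]`) with exactly `t` corners if and only if `r ≤ t ≤ r(m-r)`. -/
theorem nonflippable_facet_corner_count (m n r t : ℕ) (hr : 1 ≤ r) (hrm : r ≤ m - 1)
    (hmn : m ≤ n) :
    (∃ C : Fin r → Finset (ℤ × ℤ),
      IsFacetDecomp m n r (fun i => (i : ℤ) + 1) (fun i => (i : ℤ) + 1) C ∧
      NonFlippable m n r (fun i => (i : ℤ) + 1) (fun i => (i : ℤ) + 1) C ∧
      (cornersOf C).card = t) ↔ (r ≤ t ∧ t ≤ r * (m - r)) := by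
  have hrm' : r + 1 ≤ m := by omega
  constructor
  · rintro ⟨C, hF, hNF, hcard⟩
    subst hcard
    constructor
    · have hne : ∀ i : Fin r, (pathCorners (C i)).Nonempty := by
        intro i
        rcases Finset.eq_empty_or_nonempty (pathCorners (C i)) with h | h
        · exact absurd hNF (NFP.flip_of_hook hF hrm' hmn ⟨i, h⟩)
        · exact h
      rw [NFP.cornersOf_card hF]
      calc r = ∑ _i : Fin r, 1 := by simp
        _ ≤ ∑ i, (pathCorners (C i)).card :=
            Finset.sum_le_sum (fun i _ => Finset.card_pos.mpr (hne i))
    · rw [NFP.cornersOf_card hF]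
      calc ∑ i, (pathCorners (C i)).card ≤ ∑ _i : Fin r, (m - r) :=
            Finset.sum_le_sum (fun i _ => NFP.corner_card_le hF i)
        _ = r * (m - r) := by
            simp [Finset.sum_const, Finset.card_univ]
  · rintro ⟨ht1, ht2⟩
    obtain ⟨s, hsb0, hsd, hsum⟩ := NFP.exists_s m r (m - r) t (by omega)
      (by exact_mod_cast ht1) (by exact_mod_cast ht2)
    have hsb : ∀ k : ℤ, 1 ≤ k → k ≤ r → 1 ≤ s k ∧ s k ≤ (m : ℤ) - r := by
      intro k h1 h2
      have := hsb0 k h1 h2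
      omega
    refine ⟨NFP.CCdef m n r s, NFP.CC_facet hrm' hmn hsb hsd,
      NFP.CC_nonflip hrm' hmn hsb hsd, ?_⟩
    have hfacet := NFP.CC_facet (s := s) hrm' hmn hsb hsd
    rw [NFP.cornersOf_card hfacet]
    have hcards : ∀ i : Fin r,
        (pathCorners (NFP.CCdef m n r s i)).card = (s ((i : ℤ) + 1)).toNat := by
      intro i
      rw [NFP.CCdef_apply]
      have h2 : ((i : ℤ) + 1) ≤ r := by have := i.isLt; omega
      obtain ⟨h3, h4⟩ := hsb ((i : ℤ) + 1) (by omega) h2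
      exact NFP.PP_corners_card (by omega) h2 hrm' hmn h3 h4
    rw [Finset.sum_congr rfl (fun i _ => hcards i)]
    have hz : ((∑ i : Fin r, (s ((i : ℤ) + 1)).toNat : ℕ) : ℤ) = (t : ℤ) := by
      push_cast
      have h5 : ∀ i : Fin r, ((s ((i : ℤ) + 1)).toNat : ℤ) = s ((i : ℤ) + 1) := by
        intro i
        have h2 : ((i : ℤ) + 1) ≤ r := by have := i.isLt; omega
        have := (hsb ((i : ℤ) + 1) (by omega) h2).1
        omega
      rw [Finset.sum_congr rfl (fun i _ => h5 i), ← hsum]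
      have hkey : ∀ N : ℕ, (∑ k ∈ Finset.Icc (1 : ℤ) (N : ℤ), s k) =
          ∑ i ∈ Finset.range N, s ((i : ℤ) + 1) := by
        intro N
        induction N with
        | zero => simp
        | succ N ih =>
          have hins : Finset.Icc (1 : ℤ) ((N : ℤ) + 1) =
              insert ((N : ℤ) + 1) (Finset.Icc (1 : ℤ) (N : ℤ)) := by
            ext z
            simp only [Finset.mem_Icc, Finset.mem_insert]
            omega
          rw [Finset.sum_range_succ, ← ih,
            show ((N + 1 : ℕ) : ℤ) = (N : ℤ) + 1 by push_cast; ring, hins,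
            Finset.sum_insert (by simp only [Finset.mem_Icc]; omega)]
          ring
      rw [hkey r, ← Fin.sum_univ_eq_sum_range (fun k => s ((k : ℤ) + 1))]
    exact_mod_cast hz
end

section
/- Let $X$ be an $m\times n$ matrix of indeterminates ($m\leq n$), $I_{m-1}^*$ the initial ideal of its maximal minors with respect to the diagonal order, and $Y$ a dual $(n-m+1)\times n$ matrix of $X$ (meaning $Y_{i,j+i-1} = X_{j,j+i-1}$ for $1\leq i\leq n-m+1$, $1\leq j\leq m$), with $J_{n-m}^*$ the initial ideal of the maximal minors of $Y$. Then in the polynomial ring $T$ containing all variables of $X$ and $Y$, the Alexander dual satisfies $(I_{m-1}^*)^\vee T = J_{n-m}^* T$. -/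
open Finset

section AlexDual

variable {W : Type*} [DecidableEq W] (K : Type*) [Field K]

/-- `S` is a vertex cover of the family `𝒢`: every member of `𝒢` meets `S`. -/
def IsVertexCover (S : Finset W) (𝒢 : Set (Finset W)) : Prop :=
  ∀ G ∈ 𝒢, ∃ v ∈ S, v ∈ G

/-- The Alexander dual of the squarefree monomial ideal with generating supports `𝒢`:
the ideal generated by the squarefree monomials whose supports are vertex covers
of `𝒢`. -/
noncomputable def alexanderDual (𝒢 : Set (Finset W)) : Ideal (MvPolynomial W K) :=
  Ideal.span { g | ∃ S : Finset W, IsVertexCover S 𝒢 ∧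
    g = ∏ v ∈ S, MvPolynomial.X v }

end AlexDual

/-- The variables of the ambient polynomial ring `T`: the entries of the `m × n`
matrix `X` together with the fresh entries of its dual `(n-m+1) × n` matrix `Y`. -/
abbrev DualVars (m n : ℕ) := (Fin m × Fin n) ⊕ (Fin (n - m + 1) × Fin n)

/-- The `(i, c)` entry (0-indexed) of the dual matrix `Y` of `X`: it equals
`X_{c-i, c}` on the diagonal band (`Y_{i,j+i-1} = X_{j,j+i-1}` in 1-indexed terms), and
is a fresh indeterminate otherwise. -/
def Yent (m n : ℕ) (i : Fin (n - m + 1)) (c : Fin n) : DualVars m n :=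
  if h : (i : ℕ) ≤ (c : ℕ) ∧ (c : ℕ) < (i : ℕ) + m then
    Sum.inl (⟨(c : ℕ) - (i : ℕ), by omega⟩, c) else Sum.inr (i, c)

/-- The supports of the minimal generators of the initial ideal `I_{m-1}^*` of the
maximal minors of `X` with respect to the diagonal order: the main diagonals
`{(1,j₁),…,(m,j_m)}`, `j₁ < ⋯ < j_m`, of the maximal minors. -/
def diagSupportsX (m n : ℕ) : Set (Finset (DualVars m n)) :=
  { S | ∃ f : Fin m → Fin n, StrictMono f ∧
      S = Finset.univ.image (fun j => (Sum.inl (j, f j) : DualVars m n)) }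


namespace AlexDualAux

lemma filter_lt_card {k n : ℕ} {f : Fin k → Fin n} (hf : StrictMono f)
    {j : Fin k} {v : ℕ} (hv : (f j : ℕ) = v) :
    (univ.filter fun j' : Fin k => (f j' : ℕ) < v).card = j := by
  have h : (univ.filter fun j' : Fin k => (f j' : ℕ) < v) = Finset.Iio j := by
    ext j'
    simp only [mem_filter, mem_univ, true_and, Finset.mem_Iio, ← hv]
    rw [← Fin.lt_def, hf.lt_iff_lt]
  rw [h, Fin.card_Iio]

lemma count_succ {k n : ℕ} (f : Fin k → Fin n) (hinj : Function.Injective f) (v : ℕ) :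
    ((univ.filter fun j : Fin k => (f j : ℕ) < v + 1).card ≤
      (univ.filter fun j : Fin k => (f j : ℕ) < v).card + 1) ∧
    ((univ.filter fun j : Fin k => (f j : ℕ) < v).card + 1 ≤
      (univ.filter fun j : Fin k => (f j : ℕ) < v + 1).card → ∃ j, (f j : ℕ) = v) := by

  have hsplit : (univ.filter fun j : Fin k => (f j : ℕ) < v + 1)
      = (univ.filter fun j : Fin k => (f j : ℕ) < v) ∪ (univ.filter fun j : Fin k => (f j : ℕ) = v) := by
    ext j; simp only [mem_filter, mem_univ, true_and, mem_union]; omega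
  have hdisj : Disjoint (univ.filter fun j : Fin k => (f j : ℕ) < v)
      (univ.filter fun j : Fin k => (f j : ℕ) = v) := by
    rw [Finset.disjoint_filter]
    intro x _ h1 h2; omega
  have hcard := Finset.card_union_of_disjoint hdisj
  have hone : (univ.filter fun j : Fin k => (f j : ℕ) = v).card ≤ 1 := by
    apply Finset.card_le_one.2
    intro a ha b hb
    simp only [mem_filter] at ha hb
    exact hinj (Fin.ext (ha.2.trans hb.2.symm))
  constructor
  · rw [hsplit, hcard]; exact Nat.add_le_add_left hone _
  · intro h
    rw [hsplit, hcard] at h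
    have h1 := Nat.le_of_add_le_add_left h
    obtain ⟨j, hj⟩ := Finset.card_pos.mp (Nat.lt_of_lt_of_le Nat.zero_lt_one h1)
    exact ⟨j, (mem_filter.mp hj).2⟩

lemma exists_crossing {m n : ℕ} (hmn : m ≤ n)
    {f : Fin m → Fin n} (hf : StrictMono f)
    {g : Fin (n - m + 1) → Fin n} (hg : StrictMono g) :
    ∃ (i : Fin (n - m + 1)) (j : Fin m),
      g i = f j ∧ (g i : ℕ) = (i : ℕ) + (j : ℕ) := by
  set a : ℕ → ℕ := fun v => (univ.filter fun j : Fin m => (f j : ℕ) < v).card with ha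
  set b : ℕ → ℕ := fun v => (univ.filter fun i : Fin (n - m + 1) => (g i : ℕ) < v).card with hb
  have han : a n = m := by
    rw [ha]
    simp only
    rw [Finset.filter_true_of_mem (fun j _ => (f j).isLt), card_univ, Fintype.card_fin]
  have hbn : b n = n - m + 1 := by
    rw [hb]
    simp only
    rw [Finset.filter_true_of_mem (fun i _ => (g i).isLt), card_univ, Fintype.card_fin]
  have hex : ∃ w, w < a w + b w := ⟨n, by omega⟩
  have hw := Nat.find_spec hex
  have hw0 : Nat.find hex ≠ 0 := by
    intro h
    rw [h] at hw
    have h0 : a 0 = 0 := by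
      rw [ha]; simp only
      rw [Finset.filter_false_of_mem (fun j _ => by omega), Finset.card_empty]
    have h0' : b 0 = 0 := by
      rw [hb]; simp only
      rw [Finset.filter_false_of_mem (fun j _ => by omega), Finset.card_empty]
    omega
  obtain ⟨v, hveq⟩ : ∃ v, Nat.find hex = v + 1 := ⟨Nat.find hex - 1, by omega⟩
  rw [hveq] at hw
  have hv : ¬ (v < a v + b v) := Nat.find_min hex (by omega)
  have hfa1 : a (v + 1) ≤ a v + 1 := (count_succ f hf.injective v).1
  have hga1 : b (v + 1) ≤ b v + 1 := (count_succ g hg.injective v).1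
  obtain ⟨j, hj⟩ := (count_succ f hf.injective v).2 (show a v + 1 ≤ a (v+1) by omega)
  obtain ⟨i, hi⟩ := (count_succ g hg.injective v).2 (show b v + 1 ≤ b (v+1) by omega)
  have haj : a v = j := filter_lt_card hf hj
  have hbi : b v = i := filter_lt_card hg hi
  exact ⟨i, j, Fin.ext (by omega), by omega⟩

lemma Yent_eq_inl {m n : ℕ} {i : Fin (n - m + 1)} {c : Fin n} {j : Fin m}
    (h1 : (c : ℕ) = (i : ℕ) + (j : ℕ)) :
    Yent m n i c = Sum.inl (j, c) := by
  have hj := j.isLt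
  rw [Yent, dif_pos ⟨by omega, by omega⟩]
  simp only [Sum.inl.injEq, Prod.mk.injEq]
  exact ⟨Fin.ext (by simp; omega), trivial⟩

lemma Yent_col {m n : ℕ} (i : Fin (n - m + 1)) (c : Fin n) :
    Sum.elim (fun p : Fin m × Fin n => p.2) (fun p : Fin (n - m + 1) × Fin n => p.2)
      (Yent m n i c) = c := by
  rw [Yent]; split <;> rfl

lemma Yent_inj {m n : ℕ} {gfun : Fin (n - m + 1) → Fin n} (hg : Function.Injective gfun) :
    Function.Injective fun i => Yent m n i (gfun i) := by
  intro i i' h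
  apply hg
  have := congrArg (Sum.elim (fun p : Fin m × Fin n => p.2)
    (fun p : Fin (n - m + 1) × Fin n => p.2)) h
  simpa only [Yent_col] using this

lemma exists_transversal {m n : ℕ} (hm : 1 ≤ m) (hmn : m ≤ n)
    (S : Finset (DualVars m n))
    (hS : ∀ f : Fin m → Fin n, StrictMono f →
      ∃ j : Fin m, (Sum.inl (j, f j) : DualVars m n) ∈ S) :
    ∃ gfun : Fin (n - m + 1) → Fin n, StrictMono gfun ∧
      ∀ i, Yent m n i (gfun i) ∈ S := by
  classical
  set inS : ℕ → ℕ → Prop := fun r i =>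
    ∃ (hr : r < m) (hc : r + i < n),
      (Sum.inl (⟨r, hr⟩, ⟨r + i, hc⟩) : DualVars m n) ∈ S with hinS
  set A : ℕ → ℕ → Set ℕ := fun p i => {r | p ≤ r ∧ (inS r i ∨ r = m)} with hA
  set rho : ℕ → ℕ := fun i => Nat.rec 0 (fun i p => sInf (A p i)) i with hrho
  have rho_succ : ∀ i, rho (i + 1) = sInf (A (rho i) i) := fun i => rfl
  have hle : ∀ i, rho i ≤ m := by
    intro i
    induction i with
    | zero => exact Nat.zero_le m
    | succ i ih => rw [rho_succ]; exact Nat.sInf_le ⟨ih, Or.inr rfl⟩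
  have hspec : ∀ i, rho i ≤ rho (i + 1) ∧ (inS (rho (i + 1)) i ∨ rho (i + 1) = m) := by
    intro i
    have h : rho (i + 1) ∈ A (rho i) i := by
      rw [rho_succ]; exact Nat.sInf_mem ⟨m, hle i, Or.inr rfl⟩
    exact h
  have hmono : Monotone rho := monotone_nat_of_le_succ fun i => (hspec i).1
  by_cases hcase : ∀ i : ℕ, i ≤ n - m → rho (i + 1) < m
  · have hval : ∀ i : ℕ, i ≤ n - m → i + rho (i + 1) < n := by
      intro i h; have := hcase i h; omega
    refine ⟨fun i => ⟨(i : ℕ) + rho ((i : ℕ) + 1), hval i (Nat.lt_succ_iff.mp i.isLt)⟩, ?_, ?_⟩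
    · intro i i' h
      have h' : (i : ℕ) < (i' : ℕ) := h
      have hr := hmono (show (i : ℕ) + 1 ≤ (i' : ℕ) + 1 by omega)
      simp only [Fin.lt_def]
      omega
    · intro i
      have hilt : (i : ℕ) ≤ n - m := Nat.lt_succ_iff.mp i.isLt
      have hrlt : rho ((i : ℕ) + 1) < m := hcase _ hilt
      obtain ⟨hr, hc, hmemS⟩ : inS (rho ((i : ℕ) + 1)) (i : ℕ) := by
        rcases (hspec (i : ℕ)).2 with h | h
        · exact h
        · omega
      show Yent m n i ⟨(i : ℕ) + rho ((i : ℕ) + 1), hval i hilt⟩ ∈ S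
      rw [Yent_eq_inl (j := ⟨rho ((i : ℕ) + 1), hr⟩) rfl]
      have hc' : (⟨(i : ℕ) + rho ((i : ℕ) + 1), hval i hilt⟩ : Fin n)
          = ⟨rho ((i : ℕ) + 1) + (i : ℕ), hc⟩ := Fin.ext (Nat.add_comm _ _)
      rw [hc']
      exact hmemS
  · exfalso
    push_neg at hcase
    obtain ⟨i₀', hi₀'le, hi₀'⟩ := hcase
    have hex0 : ∃ i, rho (i + 1) = m := ⟨i₀', le_antisymm (hle (i₀' + 1)) hi₀'⟩
    set i₀ := Nat.find hex0 with hi0def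
    have hi₀m : rho (i₀ + 1) = m := Nat.find_spec hex0
    have hi₀le : i₀ ≤ n - m := le_trans (Nat.find_min' hex0 (le_antisymm (hle (i₀' + 1)) hi₀')) hi₀'le
    have hlt : ∀ i < i₀, rho (i + 1) < m :=
      fun i h => lt_of_le_of_ne (hle (i + 1)) (Nat.find_min hex0 h)
    set B : ℕ → Set ℕ := fun j => {i | i = i₀ ∨ (i < i₀ ∧ j < rho (i + 1))} with hB
    set t : ℕ → ℕ := fun j => sInf (B j) with ht
    have hBne : ∀ j, (B j).Nonempty := fun j => ⟨i₀, Or.inl rfl⟩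
    have htmem : ∀ j, t j ∈ B j := fun j => Nat.sInf_mem (hBne j)
    have htle : ∀ j, t j ≤ i₀ := fun j => Nat.sInf_le (Or.inl rfl)
    have htmono : ∀ j j', j ≤ j' → t j ≤ t j' := by
      intro j j' h
      apply Nat.sInf_le
      rcases htmem j' with h1 | ⟨h1, h2⟩
      · exact Or.inl h1
      · exact Or.inr ⟨h1, lt_of_le_of_lt h h2⟩
    have hfval : ∀ j : Fin m, (j : ℕ) + t (j : ℕ) < n := by
      intro j; have := htle (j : ℕ); have := j.isLt; omega
    obtain ⟨j, hj⟩ := hS (fun j => ⟨(j : ℕ) + t (j : ℕ), hfval j⟩) (by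
      intro j j' h
      have h' : (j : ℕ) < (j' : ℕ) := h
      have := htmono (j : ℕ) (j' : ℕ) (le_of_lt h')
      simp only [Fin.lt_def]
      omega)
    have hinSj : inS (j : ℕ) (t (j : ℕ)) := by
      refine ⟨j.isLt, hfval j, ?_⟩
      have hjeq : (⟨(j : ℕ), j.isLt⟩ : Fin m) = j := Fin.ext rfl
      rw [hjeq]
      exact hj
    have hrholt : ∀ i' < t (j : ℕ), rho (i' + 1) ≤ (j : ℕ) := by
      intro i' hi'
      by_contra h
      push_neg at h
      have hi'B : i' ∈ B (j : ℕ) := Or.inr ⟨lt_of_lt_of_le hi' (htle _), h⟩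
      have h3 : t (j : ℕ) ≤ i' := Nat.sInf_le hi'B
      omega
    have hrhoprev : rho (t (j : ℕ)) ≤ (j : ℕ) := by
      rcases Nat.eq_zero_or_pos (t (j : ℕ)) with h | h
      · rw [h]; exact Nat.zero_le _
      · have := hrholt (t (j : ℕ) - 1) (by omega)
        rwa [Nat.sub_add_cancel h] at this
    rcases htmem (j : ℕ) with hcase1 | ⟨hlt1, hlt2⟩
    · have hjA : (j : ℕ) ∈ A (rho i₀) i₀ := ⟨by rw [← hcase1]; exact hrhoprev, Or.inl (hcase1 ▸ hinSj)⟩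
      have hle' := Nat.sInf_le hjA
      rw [← rho_succ, hi₀m] at hle'
      exact absurd hle' (by have := j.isLt; omega)
    · have hjA : (j : ℕ) ∈ A (rho (t (j : ℕ))) (t (j : ℕ)) := ⟨hrhoprev, Or.inl hinSj⟩
      have hle' := Nat.sInf_le hjA
      rw [← rho_succ] at hle'
      omega

end AlexDualAux

open AlexDualAux in
open MvPolynomial in
/-- **Alexander duality for initial ideals of maximal minors.** Let `I_{m-1}^*` be the
initial ideal (generated by the main diagonal monomials) of the maximal minors of the
generic `m × n` matrix `X` (`m ≤ n`), and `J_{n-m}^*` the initial ideal of the maximal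
minors of a dual `(n-m+1) × n` matrix `Y` of `X`. Then, in the polynomial ring `T` on
all the variables of `X` and `Y`, `(I_{m-1}^*)^∨ T = J_{n-m}^* T`. -/
theorem alexander_dual_of_initial_maximal_minors (K : Type*) [Field K] (m n : ℕ)
    (hm : 1 ≤ m) (hmn : m ≤ n) :
    alexanderDual K (diagSupportsX m n) =
      Ideal.span { g : MvPolynomial (DualVars m n) K |
        ∃ gfun : Fin (n - m + 1) → Fin n, StrictMono gfun ∧
          g = ∏ i, X (Yent m n i (gfun i)) } := by
  classical
  apply le_antisymm
  · rw [alexanderDual, Ideal.span_le]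
    rintro g ⟨S, hcov, rfl⟩
    have hS : ∀ f : Fin m → Fin n, StrictMono f →
        ∃ j : Fin m, (Sum.inl (j, f j) : DualVars m n) ∈ S := by
      intro f hf
      obtain ⟨v, hvS, hvG⟩ := hcov _ ⟨f, hf, rfl⟩
      obtain ⟨j, _, rfl⟩ := Finset.mem_image.mp hvG
      exact ⟨j, hvS⟩
    obtain ⟨gfun, hgmono, hgS⟩ := exists_transversal hm hmn S hS
    have hTS : Finset.univ.image (fun i => Yent m n i (gfun i)) ⊆ S := by
      intro v hv
      obtain ⟨i, _, rfl⟩ := Finset.mem_image.mp hv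
      exact hgS i
    have himg : ∏ v ∈ Finset.univ.image (fun i => Yent m n i (gfun i)), (X v : MvPolynomial _ K)
        = ∏ i, X (Yent m n i (gfun i)) :=
      Finset.prod_image (fun x _ y _ h => Yent_inj hgmono.injective h)
    have hsd := Finset.prod_sdiff (f := fun v => (X v : MvPolynomial (DualVars m n) K)) hTS
    rw [← hsd, himg]
    exact Ideal.mul_mem_left _ _ (Ideal.subset_span ⟨gfun, hgmono, rfl⟩)
  · rw [Ideal.span_le]
    rintro g ⟨gfun, hgmono, rfl⟩
    apply Ideal.subset_span
    refine ⟨Finset.univ.image (fun i => Yent m n i (gfun i)), ?_, ?_⟩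
    · rintro G ⟨f, hf, rfl⟩
      obtain ⟨i, j, hval, hsum⟩ := exists_crossing hmn hf hgmono
      refine ⟨Yent m n i (gfun i), Finset.mem_image_of_mem _ (Finset.mem_univ i), ?_⟩
      rw [Yent_eq_inl (j := j) hsum, hval]
      exact Finset.mem_image_of_mem _ (Finset.mem_univ j)
    · exact (Finset.prod_image (fun x _ y _ h => Yent_inj hgmono.injective h)).symm
end
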